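/- arXiv:0910.5535 — 10 statements merged into one kernel-verified Lean document; each statement's English description precedes it below -/
import Mathlib

section
/- Fix an integer d ≥ 3. Let z₁ > 0 solve z₁ = (e^{z₁} − 1)/(d − 1) and set α₁ = z₁ / (d·(1 − e^{−z₁})^{d−1}). If α > α₁, then the equation (z/(αd))^{1/(d−1)} + e^{−z} − 1 = 0 has a solution z > 0; that is, the largest non-negative solution z* of this equation satisfies z* > 0. -/
/-- Fix an integer `d ≥ 3`, let `z₁ > 0` solve `z₁ = (e^{z₁}-1)/(d-1)` and
`α₁ = z₁/(d(1-e^{-z₁})^{d-1})`. If `α > α₁` then the equation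
`(z/(αd))^{1/(d-1)} + e^{-z} - 1 = 0` has a solution `z > 0`. -/
theorem stmt_2 (d : ℕ) (hd : 3 ≤ d) (z₁ α : ℝ) (hz₁pos : 0 < z₁)
    (hz₁eq : z₁ = (Real.exp z₁ - 1) / ((d : ℝ) - 1))
    (hα : z₁ / ((d : ℝ) * (1 - Real.exp (-z₁)) ^ (d - 1)) < α) :
    ∃ z : ℝ, 0 < z ∧
      (z / (α * d)) ^ (1 / ((d : ℝ) - 1)) + Real.exp (-z) - 1 = 0 := by
  set c : ℝ := 1 / ((d : ℝ) - 1) with hc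
  have hd1 : (1:ℝ) ≤ (d:ℝ) := by exact_mod_cast le_trans (by norm_num) hd
  have hdm1 : (0:ℝ) < (d:ℝ) - 1 := by
    have : (3:ℝ) ≤ (d:ℝ) := by exact_mod_cast hd
    linarith
  have hcpos : 0 < c := by positivity
  have hdpos : (0:ℝ) < (d:ℝ) := by linarith
  have hE : Real.exp (-z₁) < 1 := Real.exp_lt_one_iff.mpr (by linarith)
  have hxpos : 0 < 1 - Real.exp (-z₁) := by linarith
  have hPpos : 0 < (1 - Real.exp (-z₁)) ^ (d - 1) := pow_pos hxpos _
  have hα₁pos : 0 < z₁ / ((d : ℝ) * (1 - Real.exp (-z₁)) ^ (d - 1)) := by positivity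
  have hαpos : 0 < α := lt_trans hα₁pos hα
  have hαd : 0 < α * d := by positivity
  -- key inequality
  have hkey : z₁ / (α * d) < (1 - Real.exp (-z₁)) ^ (d - 1) := by
    rw [div_lt_iff₀ hαd]
    have := (div_lt_iff₀ (by positivity)).mp hα
    nlinarith
  -- cast of the power
  have hcast : ((d - 1 : ℕ) : ℝ) = (d : ℝ) - 1 := by
    have : 1 ≤ d := by omega
    push_cast [this]; ring
  have hPc : ((1 - Real.exp (-z₁)) ^ (d - 1)) ^ c = 1 - Real.exp (-z₁) := by
    rw [← Real.rpow_natCast (1 - Real.exp (-z₁)) (d - 1), ← Real.rpow_mul hxpos.le,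
      hcast, hc, mul_one_div, div_self hdm1.ne', Real.rpow_one]
  set f : ℝ → ℝ := fun z => (z / (α * d)) ^ c + Real.exp (-z) - 1 with hf
  have hfz₁ : f z₁ < 0 := by
    have h1 : (z₁ / (α * d)) ^ c < ((1 - Real.exp (-z₁)) ^ (d - 1)) ^ c :=
      Real.rpow_lt_rpow (by positivity) hkey hcpos
    rw [hPc] at h1
    simp only [hf]
    linarith
  have hfαd : 0 < f (α * d) := by
    simp only [hf]
    rw [div_self hαd.ne', Real.one_rpow]
    have := Real.exp_pos (-(α * d))
    linarith
  have hcont : Continuous f := by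
    apply Continuous.sub _ continuous_const
    apply Continuous.add _ (Real.continuous_exp.comp continuous_neg)
    exact (continuous_id.div_const _).rpow_const (fun x => Or.inr hcpos.le)
  rcases lt_trichotomy z₁ (α * d) with h | h | h
  · have := intermediate_value_Icc h.le hcont.continuousOn
    have h0 : (0:ℝ) ∈ Set.Icc (f z₁) (f (α * d)) := ⟨hfz₁.le, hfαd.le⟩
    obtain ⟨z, hz, hfz⟩ := this h0
    exact ⟨z, lt_of_lt_of_le hz₁pos hz.1, hfz⟩
  · exfalso; rw [h] at hfz₁; linarith
  · have := intermediate_value_Icc' h.le hcont.continuousOn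
    have h0 : (0:ℝ) ∈ Set.Icc (f z₁) (f (α * d)) := ⟨hfz₁.le, hfαd.le⟩
    obtain ⟨z, hz, hfz⟩ := this h0
    exact ⟨z, lt_of_lt_of_le hαd hz.1, hfz⟩
end

section
/- Let d ≥ 3 be an integer, α > 0, n = αm, and f(u) = e^u − u − 1. For t ∈ [0, t₁) let ζ = ζ(t) ∈ (0, αd] be defined implicitly by t = n(1 − (ζ/(αd))^{d/(d−1)}), and set w = n − t = (ζ/(αd))^{d/(d−1)} n, y(t) = e^{−ζ} f(ζ) m, and y₁(t) = m ζ ((ζ/(αd))^{1/(d−1)} + e^{−ζ} − 1). Then these functions satisfy the differential equations dy₁/dt = −1 − ((d−1)/(dw)) y₁ + ((d−1)/(dw)) · y ζ² / f(ζ) and dy/dt = −((d−1)/(dw)) · y ζ² / f(ζ), together with the constraint ζ(e^ζ − 1)/f(ζ) = (dw − y₁)/y, the relation (1/ζ)(dζ/dt) = −(d−1)/(dw), and the boundary conditions ζ(0) = αd, y₁(0) = m α d e^{−αd}, y(0) = m(1 − (1 + αd) e^{−αd}). -/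
set_option maxHeartbeats 1600000 in
/-- With `f(u) = e^u - u - 1`, `n = αm`, and `ζ(t) ∈ (0, αd]` defined
implicitly on `[0, t₁)` by `t = n(1 - (ζ/(αd))^{d/(d-1)})`, the functions
`w = n - t`, `y = e^{-ζ} f(ζ) m`, `y₁ = mζ((ζ/(αd))^{1/(d-1)} + e^{-ζ} - 1)` satisfy the
differential equations `y₁' = -1 - ((d-1)/(dw)) y₁ + ((d-1)/(dw)) yζ²/f(ζ)`,
`y' = -((d-1)/(dw)) yζ²/f(ζ)`, the constraint `ζ(e^ζ-1)/f(ζ) = (dw - y₁)/y`, the relation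
`ζ'/ζ = -(d-1)/(dw)`, and the boundary conditions `ζ(0) = αd`, `y₁(0) = mαd e^{-αd}`,
`y(0) = m(1 - (1+αd)e^{-αd})`. -/
theorem stmt_4 (d : ℕ) (hd : 3 ≤ d) (α m : ℝ) (hα : 0 < α) (hm : 0 < m)
    (f : ℝ → ℝ) (hf : ∀ u, f u = Real.exp u - u - 1)
    (n : ℝ) (hn : n = α * m)
    (t₁ : ℝ) (ht₁ : 0 < t₁)
    (ζ : ℝ → ℝ)
    (hζ : ∀ t ∈ Set.Ico (0 : ℝ) t₁, ζ t ∈ Set.Ioc 0 (α * d) ∧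
      t = n * (1 - (ζ t / (α * d)) ^ ((d : ℝ) / ((d : ℝ) - 1))))
    (w y y₁ : ℝ → ℝ)
    (hw : ∀ t, w t = n - t)
    (hy : ∀ t, y t = Real.exp (-ζ t) * f (ζ t) * m)
    (hy₁ : ∀ t, y₁ t = m * ζ t *
      ((ζ t / (α * d)) ^ (1 / ((d : ℝ) - 1)) + Real.exp (-ζ t) - 1)) :
    (∀ t ∈ Set.Ico (0 : ℝ) t₁,
      HasDerivWithinAt y₁
        (-1 - ((d : ℝ) - 1) / ((d : ℝ) * w t) * y₁ t
          + ((d : ℝ) - 1) / ((d : ℝ) * w t) * (y t * ζ t ^ 2 / f (ζ t)))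
        (Set.Ico (0 : ℝ) t₁) t ∧
      HasDerivWithinAt y
        (-(((d : ℝ) - 1) / ((d : ℝ) * w t)) * (y t * ζ t ^ 2 / f (ζ t)))
        (Set.Ico (0 : ℝ) t₁) t ∧
      ζ t * (Real.exp (ζ t) - 1) / f (ζ t) = ((d : ℝ) * w t - y₁ t) / y t ∧
      HasDerivWithinAt ζ (-(((d : ℝ) - 1) / ((d : ℝ) * w t)) * ζ t)
        (Set.Ico (0 : ℝ) t₁) t) ∧
    ζ 0 = α * d ∧
    y₁ 0 = m * (α * d) * Real.exp (-(α * d)) ∧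
    y 0 = m * (1 - (1 + α * d) * Real.exp (-(α * d))) := by
  subst hn
  have hD3 : (3:ℝ) ≤ (d:ℝ) := by exact_mod_cast hd
  set D : ℝ := (d:ℝ) with hDdef
  have hDpos : 0 < D := by linarith
  have hD1 : 0 < D - 1 := by linarith
  have hαD : 0 < α * D := by positivity
  have hnpos : 0 < α * m := by positivity
  have hfpos : ∀ u : ℝ, 0 < u → 0 < f u := by
    intro u hu
    rw [hf]
    have := Real.add_one_lt_exp (ne_of_gt hu)
    linarith
  -- basic pointwise facts
  have hfacts : ∀ t ∈ Set.Ico (0:ℝ) t₁,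
      0 < ζ t ∧ ζ t ≤ α * D ∧
      (ζ t / (α * D)) ^ (D / (D - 1)) = (α * m - t) / (α * m) ∧ 0 < α * m - t := by
    intro t ht
    obtain ⟨⟨h1, h2⟩, h3⟩ := hζ t ht
    have hnt : α * m - t = (α * m) * ((ζ t / (α * D)) ^ (D / (D - 1))) := by
      linear_combination -h3
    have hr : (ζ t / (α * D)) ^ (D / (D - 1)) = (α * m - t) / (α * m) := by
      rw [eq_div_iff (ne_of_gt hnpos), hnt]; ring
    have hrpos : 0 < (ζ t / (α * D)) ^ (D / (D - 1)) :=
      Real.rpow_pos_of_pos (by positivity) _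
    refine ⟨h1, h2, hr, ?_⟩
    rw [hnt]; positivity
  -- explicit formula for ζ
  have hform : ∀ t ∈ Set.Ico (0:ℝ) t₁,
      ζ t = (α * D) * ((α * m - t) / (α * m)) ^ ((D - 1) / D) := by
    intro t ht
    obtain ⟨h1, h2, hr, h4⟩ := hfacts t ht
    have hxpos : 0 < ζ t / (α * D) := by positivity
    have hexp : D / (D - 1) * ((D - 1) / D) = 1 := by field_simp
    have h5 : ((ζ t / (α * D)) ^ (D / (D - 1))) ^ ((D - 1) / D) = ζ t / (α * D) := by
      rw [← Real.rpow_mul (le_of_lt hxpos), hexp, Real.rpow_one]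
    rw [hr] at h5
    rw [h5]
    field_simp
  -- key algebraic identity
  have hkey : ∀ t ∈ Set.Ico (0:ℝ) t₁,
      ζ t * (ζ t / (α * D)) ^ (1 / (D - 1)) = (α * D) * (α * m - t) / (α * m) := by
    intro t ht
    obtain ⟨h1, h2, hr, h4⟩ := hfacts t ht
    have hxpos : 0 < ζ t / (α * D) := by positivity
    have hsplit : D / (D - 1) = 1 + 1 / (D - 1) := by field_simp; ring
    have h5 : (ζ t / (α * D)) ^ ((1:ℝ) + 1 / (D - 1))
        = (ζ t / (α * D)) * (ζ t / (α * D)) ^ (1 / (D - 1)) := by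
      rw [Real.rpow_add hxpos, Real.rpow_one]
    rw [hsplit, h5] at hr
    have h8 : ζ t / (α * D) * (ζ t / (α * D)) ^ (1 / (D - 1)) * (α * D)
        = (α * m - t) / (α * m) * (α * D) := by rw [hr]
    field_simp at h8 ⊢
    linarith [h8]
  -- derivative of ζ
  have hζd : ∀ t ∈ Set.Ico (0:ℝ) t₁,
      HasDerivWithinAt ζ (-((D - 1) / (D * (α * m - t))) * ζ t) (Set.Ico 0 t₁) t := by
    intro t ht
    obtain ⟨h1, h2, hr, h4⟩ := hfacts t ht
    have hxpos : 0 < (α * m - t) / (α * m) := by positivity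
    have hg : HasDerivAt (fun s => (α * m - s) / (α * m)) (-1 / (α * m)) t := by
      have : HasDerivAt (fun s : ℝ => α * m - s) (-1) t := by
        simpa using ((hasDerivAt_id t).const_sub (α * m))
      simpa using this.div_const (α * m)
    have hF : HasDerivAt (fun s => (α * D) * ((α * m - s) / (α * m)) ^ ((D - 1) / D))
        ((α * D) * (-1 / (α * m) * ((D - 1) / D) * ((α * m - t) / (α * m)) ^ ((D - 1) / D - 1))) t :=
      (hg.rpow_const (Or.inl (ne_of_gt hxpos))).const_mul _
    have hFW := hF.hasDerivWithinAt.congr (fun s hs => hform s hs) (hform t ht)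
    refine hFW.congr_deriv (Eq.symm ?_)
    rw [hform t ht, Real.rpow_sub hxpos, Real.rpow_one]
    have hne : ((α * m - t) / (α * m)) ^ ((D - 1) / D) ≠ 0 :=
      ne_of_gt (Real.rpow_pos_of_pos hxpos _)
    field_simp
  -- ζ at 0
  have h0 : (0:ℝ) ∈ Set.Ico (0:ℝ) t₁ := ⟨le_refl _, ht₁⟩
  have hζ0 : ζ 0 = α * D := by
    obtain ⟨h1, h2, hr, h4⟩ := hfacts 0 h0
    have hxpos : 0 < ζ 0 / (α * D) := by positivity
    have hone : (ζ 0 / (α * D)) ^ (D / (D - 1)) = 1 := by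
      rw [hr, sub_zero, div_self (ne_of_gt hnpos)]
    have hexp : D / (D - 1) * ((D - 1) / D) = 1 := by field_simp
    have h5 : ((ζ 0 / (α * D)) ^ (D / (D - 1))) ^ ((D - 1) / D) = (1:ℝ) ^ ((D - 1) / D) := by
      rw [hone]
    rw [← Real.rpow_mul (le_of_lt hxpos), hexp, Real.rpow_one, Real.one_rpow] at h5
    field_simp at h5
    linarith
  refine ⟨?_, hζ0, ?_, ?_⟩
  · intro t ht
    obtain ⟨h1, h2, hr, h4⟩ := hfacts t ht
    have hζt := hζd t ht
    have hfne : f (ζ t) ≠ 0 := ne_of_gt (hfpos _ h1)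
    have hfe : Real.exp (ζ t) - ζ t - 1 ≠ 0 := by rw [hf] at hfne; exact hfne
    have hxpos : 0 < ζ t / (α * D) := by positivity
    have hkt := hkey t ht
    have hR : (ζ t / (α * D)) ^ (1 / (D - 1)) = (α * D) * (α * m - t) / ((α * m) * ζ t) := by
      field_simp at hkt ⊢
      linarith [hkt]
    set c : ℝ := -((D - 1) / (D * (α * m - t))) * ζ t with hc
    refine ⟨?_, ?_, ?_, by rw [hw]; exact hζt⟩
    -- y₁'
    · have hrp : HasDerivWithinAt (fun s => (ζ s / (α * D)) ^ (1 / (D - 1)))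
          (c / (α * D) * (1 / (D - 1)) * (ζ t / (α * D)) ^ (1 / (D - 1) - 1))
          (Set.Ico 0 t₁) t :=
        (hζt.div_const (α * D)).rpow_const (Or.inl (ne_of_gt hxpos))
      have hex : HasDerivWithinAt (fun s => Real.exp (-ζ s))
          (Real.exp (-ζ t) * (-c)) (Set.Ico 0 t₁) t := hζt.neg.exp
      have hprod : HasDerivWithinAt
          (fun s => m * ζ s * ((ζ s / (α * D)) ^ (1 / (D - 1)) + Real.exp (-ζ s) - 1))
          (m * c * ((ζ t / (α * D)) ^ (1 / (D - 1)) + Real.exp (-ζ t) - 1)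
            + m * ζ t * (c / (α * D) * (1 / (D - 1)) * (ζ t / (α * D)) ^ (1 / (D - 1) - 1)
              + Real.exp (-ζ t) * (-c))) (Set.Ico 0 t₁) t :=
        (hζt.const_mul m).mul ((hrp.add hex).sub_const 1)
      have hW := hprod.congr (fun s _ => hy₁ s) (hy₁ t)
      refine hW.congr_deriv (Eq.symm ?_)
      rw [hy₁, hy, hw, hf, Real.rpow_sub hxpos, Real.rpow_one, hR, hc, Real.exp_neg]
      have hene : Real.exp (ζ t) ≠ 0 := Real.exp_ne_zero _
      field_simp
      ring
    -- y'
    · have hex : HasDerivWithinAt (fun s => Real.exp (-ζ s))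
          (Real.exp (-ζ t) * (-c)) (Set.Ico 0 t₁) t := hζt.neg.exp
      have hprod : HasDerivWithinAt
          (fun s => (1 - (1 + ζ s) * Real.exp (-ζ s)) * m)
          ((0 - (c * Real.exp (-ζ t) + (1 + ζ t) * (Real.exp (-ζ t) * (-c)))) * m)
          (Set.Ico 0 t₁) t :=
        (((hasDerivWithinAt_const t _ (1:ℝ)).sub ((hζt.const_add 1).mul hex)).mul_const m)
      have hyeq : ∀ s, y s = (1 - (1 + ζ s) * Real.exp (-ζ s)) * m := by
        intro s
        have hE : Real.exp (-ζ s) * Real.exp (ζ s) = 1 := by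
          rw [← Real.exp_add]; simp
        rw [hy, hf]
        linear_combination m * hE
      have hW := hprod.congr (fun s _ => hyeq s) (hyeq t)
      refine hW.congr_deriv (Eq.symm ?_)
      rw [hy, hw, hf, hc, Real.exp_neg]
      field_simp
      ring
    -- constraint
    · rw [hy₁, hy, hw, hf, hR, Real.exp_neg]
      have hene : Real.exp (ζ t) ≠ 0 := Real.exp_ne_zero _
      have hyne : (Real.exp (ζ t))⁻¹ * (Real.exp (ζ t) - ζ t - 1) * m ≠ 0 := by
        have h9 : 0 < Real.exp (ζ t) - ζ t - 1 := by
          have := hfpos _ h1; rw [hf] at this; exact this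
        positivity
      field_simp
      ring
  -- y₁ 0
  · rw [hy₁, hζ0]
    have h5 : α * D / (α * D) = 1 := div_self (ne_of_gt hαD)
    rw [h5, Real.one_rpow]
    ring
  -- y 0
  · rw [hy, hζ0, hf, Real.exp_neg]
    field_simp
    ring
end

section
/- Let f(u) = e^u − u − 1 and for x > 2 let ζ(x) > 0 be the unique positive solution of u(e^u − 1)/f(u) = x. Define g(x) = (e^{ζ(x)} − 1)^x · f(ζ(x))^{1−x}. Then g is log-concave on (2, ∞); more precisely, (d²/dx²) log g(x) = (ζ'(x)/((e^ζ − 1) f(ζ))) · (−(ζ − 1)e^ζ − 1) < 0 for all x > 2, where ζ = ζ(x). -/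
open Real Filter Set Topology

noncomputable def Hfun : ℝ → ℝ := fun u => u * (Real.exp u - 1) / (Real.exp u - u - 1)

private lemma aux_pos_of_deriv (F F' : ℝ → ℝ) (hF : ∀ t, HasDerivAt F (F' t) t)
    (h0 : F 0 = 0) (hpos : ∀ t > 0, 0 < F' t) : ∀ z > 0, 0 < F z := by
  intro z hz
  have hmono : StrictMonoOn F (Set.Ici 0) :=
    strictMonoOn_of_deriv_pos (convex_Ici 0)
      (fun t _ => (hF t).continuousAt.continuousWithinAt)
      (fun t ht => by rw [(hF t).deriv]; exact hpos t (by simpa [interior_Ici] using ht))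
  have h := hmono Set.self_mem_Ici (le_of_lt hz : z ∈ Set.Ici 0) hz
  rwa [h0] at h

private lemma fz_pos : ∀ z > 0, 0 < Real.exp z - z - 1 := by
  intro z hz
  nlinarith [Real.add_one_lt_exp (ne_of_gt hz)]

private lemma E1_pos : ∀ z > 0, 0 < Real.exp z - 1 := by
  intro z hz
  nlinarith [Real.add_one_lt_exp (ne_of_gt hz)]

private lemma q_pos : ∀ z > 0, 0 < (z - 1) * Real.exp z + 1 := by
  apply aux_pos_of_deriv _ (fun t => t * Real.exp t)
  · intro t
    have h := (((hasDerivAt_id t).sub_const 1).mul (Real.hasDerivAt_exp t)).add_const 1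
    refine h.congr_deriv ?_
    simp only [id_eq]
    ring
  · simp
  · intro t ht; positivity

private lemma s_pos : ∀ z > 0, 0 < 2 * Real.exp z - 2 - 2 * z - z ^ 2 := by
  apply aux_pos_of_deriv _ (fun t => 2 * Real.exp t - 2 - 2 * t)
  · intro t
    have h := (((((Real.hasDerivAt_exp t).const_mul 2).sub_const 2).sub
      ((hasDerivAt_id t).const_mul 2)).sub (hasDerivAt_pow 2 t))
    refine h.congr_deriv ?_
    norm_num
  · simp
  · intro t ht; nlinarith [Real.add_one_lt_exp (ne_of_gt ht)]

private lemma P_pos : ∀ z > 0, 0 < (Real.exp z - 1) ^ 2 - z ^ 2 * Real.exp z := by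
  apply aux_pos_of_deriv _
    (fun t => 2 * (Real.exp t - 1) ^ 1 * Real.exp t - ((2 : ℕ) * t ^ 1 * Real.exp t + t ^ 2 * Real.exp t))
  · intro t
    exact (((Real.hasDerivAt_exp t).sub_const 1).pow 2).sub
      ((hasDerivAt_pow 2 t).mul (Real.hasDerivAt_exp t))
  · simp
  · intro t ht
    have hs := s_pos t ht
    have he := Real.exp_pos t
    push_cast
    nlinarith [mul_pos he hs]

private lemma H_deriv : ∀ z > 0, HasDerivAt Hfun
    (((Real.exp z - 1) ^ 2 - z ^ 2 * Real.exp z) / (Real.exp z - z - 1) ^ 2) z := by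
  intro z hz
  have hN : HasDerivAt (fun u => u * (Real.exp u - 1))
      (1 * (Real.exp z - 1) + z * Real.exp z) z :=
    (hasDerivAt_id z).mul ((Real.hasDerivAt_exp z).sub_const 1)
  have hD : HasDerivAt (fun u => Real.exp u - u - 1) (Real.exp z - 1) z :=
    ((Real.hasDerivAt_exp z).sub (hasDerivAt_id z)).sub_const 1
  have h := hN.div hD (ne_of_gt (fz_pos z hz))
  refine h.congr_deriv ?_
  have hne : (Real.exp z - z - 1) ≠ 0 := ne_of_gt (fz_pos z hz)
  field_simp
  ring

private lemma H_mono : StrictMonoOn Hfun (Set.Ioi 0) := by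
  apply strictMonoOn_of_deriv_pos (convex_Ioi 0)
  · exact fun u hu => (H_deriv u hu).continuousAt.continuousWithinAt
  · intro u hu
    rw [interior_Ioi] at hu
    rw [(H_deriv u hu).deriv]
    exact div_pos (P_pos u hu) (pow_pos (fz_pos u hu) 2)

private lemma alg1 (E z x : ℝ) (hE1 : E - 1 ≠ 0) (hfz : E - z - 1 ≠ 0)
    (hP : (E - 1) ^ 2 - z ^ 2 * E ≠ 0) (hcon : z * (E - 1) = x * (E - z - 1)) :
    x * ((E - 1)⁻¹ * (E * ((E - z - 1) ^ 2 / ((E - 1) ^ 2 - z ^ 2 * E)))) +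
      (1 - x) * ((E - z - 1)⁻¹ * (E * ((E - z - 1) ^ 2 / ((E - 1) ^ 2 - z ^ 2 * E)) -
        (E - z - 1) ^ 2 / ((E - 1) ^ 2 - z ^ 2 * E))) = 1 := by
  have hx : x = z * (E - 1) / (E - z - 1) := by
    rw [eq_div_iff hfz]; linarith
  subst hx
  field_simp
  ring

/-- With `f(u) = e^u - u - 1`, `ζ(x)` the unique positive root of
`ζ(e^ζ-1)/f(ζ) = x` for `x > 2`, and `g(x) = (e^{ζ(x)}-1)^x f(ζ(x))^{1-x}`, the function
`g` is log-concave on `(2, ∞)`; more precisely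
`(log g)''(x) = (ζ'(x)/((e^ζ-1)f(ζ))) · (-(ζ-1)e^ζ - 1) < 0`. -/
theorem stmt_5 (f ζ g : ℝ → ℝ)
    (hf : ∀ u, f u = Real.exp u - u - 1)
    (hζ : ∀ x > 2, 0 < ζ x ∧ ζ x * (Real.exp (ζ x) - 1) / f (ζ x) = x)
    (hg : ∀ x, g x = (Real.exp (ζ x) - 1) ^ x * f (ζ x) ^ (1 - x)) :
    ConcaveOn ℝ (Set.Ioi 2) (fun x => Real.log (g x)) ∧
    ∀ x > 2,
      deriv (deriv (fun t => Real.log (g t))) x =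
        deriv ζ x / ((Real.exp (ζ x) - 1) * f (ζ x)) *
          (-(ζ x - 1) * Real.exp (ζ x) - 1) ∧
      deriv (deriv (fun t => Real.log (g t))) x < 0 := by
  have hz0 : ∀ x > 2, 0 < ζ x := fun x hx => (hζ x hx).1
  have hHz : ∀ x > 2, Hfun (ζ x) = x := by
    intro x hx
    have h := (hζ x hx).2
    rw [hf] at h
    exact h
  -- continuity of ζ on (2, ∞)
  have hcont : ∀ x > 2, ContinuousAt ζ x := by
    intro x hx
    have hzx := hz0 x hx
    rw [ContinuousAt, tendsto_order]
    constructor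
    · intro a ha
      rcases le_or_gt a 0 with h | h
      · filter_upwards [Ioi_mem_nhds hx] with y hy
        exact lt_of_le_of_lt h (hz0 y hy)
      · have hHa : Hfun a < x := by
          rw [← hHz x hx]
          exact H_mono (Set.mem_Ioi.2 h) (Set.mem_Ioi.2 hzx) ha
        filter_upwards [Ioi_mem_nhds hx, Ioi_mem_nhds hHa] with y hy hy2
        by_contra hc
        push_neg at hc
        have hle : Hfun (ζ y) ≤ Hfun a :=
          H_mono.monotoneOn (Set.mem_Ioi.2 (hz0 y hy)) (Set.mem_Ioi.2 h) hc
        rw [hHz y hy] at hle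
        exact absurd hle (not_le.2 hy2)
    · intro b hb
      have hb0 : 0 < b := lt_trans hzx hb
      have hHb : x < Hfun b := by
        rw [← hHz x hx]
        exact H_mono (Set.mem_Ioi.2 hzx) (Set.mem_Ioi.2 hb0) hb
      filter_upwards [Ioi_mem_nhds hx, Iio_mem_nhds hHb] with y hy hy2
      by_contra hc
      push_neg at hc
      have hle : Hfun b ≤ Hfun (ζ y) :=
        H_mono.monotoneOn (Set.mem_Ioi.2 hb0) (Set.mem_Ioi.2 (hz0 y hy)) hc
      rw [hHz y hy] at hle
      exact absurd hle (not_le.2 hy2)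
  -- derivative of ζ
  set ZD : ℝ → ℝ := fun x => (Real.exp (ζ x) - ζ x - 1) ^ 2 /
    ((Real.exp (ζ x) - 1) ^ 2 - (ζ x) ^ 2 * Real.exp (ζ x)) with hZD
  have hzd : ∀ x > 2, HasDerivAt ζ (ZD x) x := by
    intro x hx
    have hP := P_pos (ζ x) (hz0 x hx)
    have hfz := fz_pos (ζ x) (hz0 x hx)
    have h := HasDerivAt.of_local_left_inverse (hcont x hx) (H_deriv (ζ x) (hz0 x hx))
      (ne_of_gt (div_pos hP (pow_pos hfz 2)))
      (by filter_upwards [Ioi_mem_nhds hx] with y hy; exact hHz y hy)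
    rw [inv_div] at h
    exact h
  -- log g = L1 on (2, ∞)
  set L1 : ℝ → ℝ := fun y => y * Real.log (Real.exp (ζ y) - 1) +
    (1 - y) * Real.log (Real.exp (ζ y) - ζ y - 1) with hL1def
  have hlogg : ∀ y > 2, Real.log (g y) = L1 y := by
    intro y hy
    have hE1 := E1_pos (ζ y) (hz0 y hy)
    have hfz := fz_pos (ζ y) (hz0 y hy)
    rw [hg y, hf, Real.log_mul (ne_of_gt (Real.rpow_pos_of_pos hE1 y))
      (ne_of_gt (Real.rpow_pos_of_pos hfz (1 - y))), Real.log_rpow hE1, Real.log_rpow hfz]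
  set D1 : ℝ → ℝ := fun y => Real.log (Real.exp (ζ y) - 1) -
    Real.log (Real.exp (ζ y) - ζ y - 1) + 1 with hD1def
  -- per-point first and second derivative data
  have key : ∀ x > 2, HasDerivAt (fun t => Real.log (g t)) (D1 x) x ∧
      HasDerivAt D1 ((Real.exp (ζ x) - 1)⁻¹ * (Real.exp (ζ x) * ZD x) -
        (Real.exp (ζ x) - ζ x - 1)⁻¹ * (Real.exp (ζ x) * ZD x - ZD x)) x := by
    intro x hx
    have hzx := hz0 x hx
    have hE1 := E1_pos (ζ x) hzx
    have hfz := fz_pos (ζ x) hzx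
    have hP := P_pos (ζ x) hzx
    have hzdx := hzd x hx
    have hA : HasDerivAt (fun y => Real.log (Real.exp (ζ y) - 1))
        ((Real.exp (ζ x) - 1)⁻¹ * (Real.exp (ζ x) * ZD x)) x :=
      by have := (Real.hasDerivAt_log (ne_of_gt hE1)).comp x
                  (((Real.hasDerivAt_exp (ζ x)).comp x hzdx).sub_const 1)
         exact this
    have hB : HasDerivAt (fun y => Real.log (Real.exp (ζ y) - ζ y - 1))
        ((Real.exp (ζ x) - ζ x - 1)⁻¹ * (Real.exp (ζ x) * ZD x - ZD x)) x :=
      by have := (Real.hasDerivAt_log (ne_of_gt hfz)).comp x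
                  ((((Real.hasDerivAt_exp (ζ x)).comp x hzdx).sub hzdx).sub_const 1)
         exact this
    constructor
    · have hL1d : HasDerivAt L1
          (1 * Real.log (Real.exp (ζ x) - 1) +
            x * ((Real.exp (ζ x) - 1)⁻¹ * (Real.exp (ζ x) * ZD x)) +
          ((0 - 1) * Real.log (Real.exp (ζ x) - ζ x - 1) +
            (1 - x) * ((Real.exp (ζ x) - ζ x - 1)⁻¹ * (Real.exp (ζ x) * ZD x - ZD x)))) x :=
        ((hasDerivAt_id x).mul hA).add
          (((hasDerivAt_const x 1).sub (hasDerivAt_id x)).mul hB)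
      have hcon : ζ x * (Real.exp (ζ x) - 1) = x * (Real.exp (ζ x) - ζ x - 1) := by
        have h := hHz x hx
        rw [Hfun, div_eq_iff (ne_of_gt hfz)] at h
        linarith [h]
      have hval : 1 * Real.log (Real.exp (ζ x) - 1) +
            x * ((Real.exp (ζ x) - 1)⁻¹ * (Real.exp (ζ x) * ZD x)) +
          ((0 - 1) * Real.log (Real.exp (ζ x) - ζ x - 1) +
            (1 - x) * ((Real.exp (ζ x) - ζ x - 1)⁻¹ * (Real.exp (ζ x) * ZD x - ZD x))) = D1 x := by
        have hb := alg1 (Real.exp (ζ x)) (ζ x) x (ne_of_gt hE1) (ne_of_gt hfz)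
          (ne_of_gt hP) hcon
        rw [hZD, hD1def]
        linear_combination hb
      rw [hval] at hL1d
      exact hL1d.congr_of_eventuallyEq
        (by filter_upwards [Ioi_mem_nhds hx] with y hy; exact hlogg y hy)
    · exact (hA.sub hB).add_const 1
  -- deriv of log g equals D1 on (2, ∞)
  have heq : ∀ x > 2, deriv (fun t => Real.log (g t)) =ᶠ[𝓝 x] D1 := by
    intro x hx
    filter_upwards [Ioi_mem_nhds hx] with y hy
    exact ((key y hy).1).deriv
  have hderiv2 : ∀ x > 2, deriv (deriv (fun t => Real.log (g t))) x =
      (Real.exp (ζ x) - 1)⁻¹ * (Real.exp (ζ x) * ZD x) -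
        (Real.exp (ζ x) - ζ x - 1)⁻¹ * (Real.exp (ζ x) * ZD x - ZD x) := by
    intro x hx
    rw [(heq x hx).deriv_eq]
    exact ((key x hx).2).deriv
  have hneg : ∀ x > 2, deriv (deriv (fun t => Real.log (g t))) x < 0 := by
    intro x hx
    rw [hderiv2 x hx]
    have hzx := hz0 x hx
    have hE1 := E1_pos (ζ x) hzx
    have hfz := fz_pos (ζ x) hzx
    have hP := P_pos (ζ x) hzx
    have hq := q_pos (ζ x) hzx
    have hZDpos : 0 < ZD x := div_pos (pow_pos hfz 2) hP
    rw [show (Real.exp (ζ x) - 1)⁻¹ * (Real.exp (ζ x) * ZD x) -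
        (Real.exp (ζ x) - ζ x - 1)⁻¹ * (Real.exp (ζ x) * ZD x - ZD x) =
        ZD x / ((Real.exp (ζ x) - 1) * (Real.exp (ζ x) - ζ x - 1)) *
          (-(ζ x - 1) * Real.exp (ζ x) - 1) from by field_simp; ring]
    apply mul_neg_of_pos_of_neg
    · exact div_pos hZDpos (mul_pos hE1 hfz)
    · linarith
  constructor
  · apply concaveOn_of_deriv2_nonpos (convex_Ioi 2)
    · exact fun y hy => ((key y hy).1).continuousAt.continuousWithinAt
    · intro y hy
      rw [interior_Ioi] at hy
      exact ((key y hy).1).differentiableAt.differentiableWithinAt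
    · intro y hy
      rw [interior_Ioi] at hy
      exact (((key y hy).2).congr_of_eventuallyEq (heq y hy)).differentiableAt.differentiableWithinAt
    · intro y hy
      rw [interior_Ioi] at hy
      show deriv (deriv (fun x => Real.log (g x))) y ≤ 0
      exact le_of_lt (hneg y hy)
  · intro x hx
    refine ⟨?_, hneg x hx⟩
    rw [hderiv2 x hx, (hzd x hx).deriv, hf]
    have hzx := hz0 x hx
    have hE1 := E1_pos (ζ x) hzx
    have hfz := fz_pos (ζ x) hzx
    have hP := P_pos (ζ x) hzx
    rw [hZD]
    field_simp
    ring
end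

section
/- Let f(u) = e^u − u − 1 and for x > 2 let ζ(x) > 0 be the unique positive solution of u(e^u − 1)/f(u) = x. Then ζ is a concave function of x on (2, ∞), i.e. ζ''(x) ≤ 0 for all x > 2. -/
open Real Set Filter

/-! Auxiliary machinery for statement 6. -/

noncomputable def stmt6_g (u : ℝ) : ℝ := u * (Real.exp u - 1) / (Real.exp u - u - 1)

noncomputable def stmt6_G1 (u : ℝ) : ℝ :=
  ((Real.exp u - 1) ^ 2 - u ^ 2 * Real.exp u) / (Real.exp u - u - 1) ^ 2

noncomputable def stmt6_G2 (u : ℝ) : ℝ :=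
  ((u ^ 2 - 4 * u + 2) * Real.exp u ^ 2 + (u ^ 3 + u ^ 2 + 4 * u - 4) * Real.exp u + 2) /
    (Real.exp u - u - 1) ^ 3

lemma stmt6_aux_pos {F F' : ℝ → ℝ} (h : ∀ t, HasDerivAt F (F' t) t) (h0 : F 0 = 0)
    (hF' : ∀ t, 0 < t → 0 < F' t) : ∀ u, 0 < u → 0 < F u := by
  intro u hu
  have hsm : StrictMonoOn F (Ici 0) := by
    apply strictMonoOn_of_deriv_pos (convex_Ici 0)
      (fun t _ => (h t).continuousAt.continuousWithinAt)
    intro t ht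
    rw [interior_Ici] at ht
    rw [(h t).deriv]
    exact hF' t ht
  have := hsm self_mem_Ici hu.le hu
  linarith

lemma stmt6_aux_nonneg {F F' : ℝ → ℝ} (h : ∀ t, HasDerivAt F (F' t) t) (h0 : F 0 = 0)
    (hF' : ∀ t, 0 ≤ t → 0 ≤ F' t) : ∀ u, 0 ≤ u → 0 ≤ F u := by
  intro u hu
  have hsm : MonotoneOn F (Ici 0) := by
    apply monotoneOn_of_deriv_nonneg (convex_Ici 0)
      (fun t _ => (h t).continuousAt.continuousWithinAt)
      (fun t _ => (h t).differentiableAt.differentiableWithinAt)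
    intro t ht
    rw [interior_Ici] at ht
    rw [(h t).deriv]
    exact hF' t ht.le
  have := hsm self_mem_Ici hu hu
  linarith

lemma stmt6_D_pos {u : ℝ} (hu : 0 < u) : 0 < Real.exp u - u - 1 := by
  have := Real.add_one_lt_exp (ne_of_gt hu)
  linarith

lemma stmt6_P_pos {u : ℝ} (hu : 0 < u) : 0 < (Real.exp u - 1) ^ 2 - u ^ 2 * Real.exp u := by
  -- chain of three derivative arguments
  have h1 : ∀ u : ℝ, 0 < u → 0 < 2 * Real.exp u - 2 - 2 * u := by
    apply stmt6_aux_pos (F' := fun t => 2 * Real.exp t - 2)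
    · intro t
      have h := (((Real.hasDerivAt_exp t).const_mul 2).sub_const 2).sub
        ((hasDerivAt_id' (𝕜 := ℝ) (x := t)).const_mul 2)
      exact h.congr_deriv (by ring)
    · simp
    · intro t ht
      have : (1:ℝ) < Real.exp t := by
        calc (1:ℝ) = Real.exp 0 := by simp
        _ < Real.exp t := Real.exp_lt_exp.mpr ht
      linarith
  have h2 : ∀ u : ℝ, 0 < u → 0 < 2 * Real.exp u - 2 - 2 * u - u ^ 2 := by
    apply stmt6_aux_pos (F' := fun t => 2 * Real.exp t - 2 - 2 * t)
    · intro t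
      have hprev := (((Real.hasDerivAt_exp t).const_mul 2).sub_const 2).sub
        ((hasDerivAt_id' (𝕜 := ℝ) (x := t)).const_mul 2)
      have := hprev.sub (hasDerivAt_pow 2 t)
      exact this.congr_deriv (by push_cast; ring)
    · simp
    · exact h1
  apply stmt6_aux_pos
    (F' := fun t => Real.exp t * (2 * Real.exp t - 2 - 2 * t - t ^ 2)) _ _ _ _ hu
  · intro t
    have ha : HasDerivAt (fun t : ℝ => (Real.exp t - 1) ^ 2)
        ((2:ℕ) * (Real.exp t - 1) ^ (2 - 1) * Real.exp t) t :=
      ((Real.hasDerivAt_exp t).sub_const 1).pow 2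
    have hb : HasDerivAt (fun t : ℝ => t ^ 2 * Real.exp t)
        ((2:ℕ) * t ^ (2 - 1) * Real.exp t + t ^ 2 * Real.exp t) t :=
      (hasDerivAt_pow 2 t).mul (Real.hasDerivAt_exp t)
    have := ha.sub hb
    exact this.congr_deriv (by push_cast; ring)
  · norm_num
  · intro t ht
    exact mul_pos (Real.exp_pos t) (h2 t ht)

lemma stmt6_Q_nonneg {u : ℝ} (hu : 0 ≤ u) :
    0 ≤ (u ^ 2 - 4 * u + 2) * Real.exp u ^ 2 + (u ^ 3 + u ^ 2 + 4 * u - 4) * Real.exp u + 2 := by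
  have hT : ∀ u : ℝ, 0 ≤ u → 0 ≤ (2 * u - 2) * Real.exp u + 2 := by
    apply stmt6_aux_nonneg (F' := fun t => 2 * t * Real.exp t)
    · intro t
      have hlin : HasDerivAt (fun t : ℝ => 2 * t - 2) (2 * 1) t :=
        ((hasDerivAt_id' (𝕜 := ℝ) (x := t)).const_mul 2).sub_const 2
      have := (hlin.mul (Real.hasDerivAt_exp t)).add_const 2
      exact this.congr_deriv (by ring)
    · simp
    · intro t ht
      exact mul_nonneg (by linarith) (Real.exp_pos t).le
  have hS : ∀ u : ℝ, 0 ≤ u → 0 ≤ (2 * u - 4) * Real.exp u + (2 * u + 4) := by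
    apply stmt6_aux_nonneg (F' := fun t => (2 * t - 2) * Real.exp t + 2)
    · intro t
      have hlin : HasDerivAt (fun t : ℝ => 2 * t - 4) (2 * 1) t :=
        ((hasDerivAt_id' (𝕜 := ℝ) (x := t)).const_mul 2).sub_const 4
      have hlin2 : HasDerivAt (fun t : ℝ => 2 * t + 4) (2 * 1) t :=
        ((hasDerivAt_id' (𝕜 := ℝ) (x := t)).const_mul 2).add_const 4
      have := (hlin.mul (Real.hasDerivAt_exp t)).add hlin2
      exact this.congr_deriv (by ring)
    · simp
    · exact hT
  have hR : ∀ u : ℝ, 0 ≤ u → 0 ≤ (2 * u - 6) * Real.exp u + (u ^ 2 + 4 * u + 6) := by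
    apply stmt6_aux_nonneg (F' := fun t => (2 * t - 4) * Real.exp t + (2 * t + 4))
    · intro t
      have hlin : HasDerivAt (fun t : ℝ => 2 * t - 6) (2 * 1) t :=
        ((hasDerivAt_id' (𝕜 := ℝ) (x := t)).const_mul 2).sub_const 6
      have hpoly : HasDerivAt (fun t : ℝ => t ^ 2 + 4 * t + 6)
          ((2:ℕ) * t ^ (2 - 1) + 4 * 1) t :=
        ((hasDerivAt_pow 2 t).add ((hasDerivAt_id' (𝕜 := ℝ) (x := t)).const_mul 4)).add_const 6
      have := (hlin.mul (Real.hasDerivAt_exp t)).add hpoly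
      exact this.congr_deriv (by push_cast; ring)
    · simp
    · exact hS
  apply stmt6_aux_nonneg
    (F' := fun t => t * Real.exp t * ((2 * t - 6) * Real.exp t + (t ^ 2 + 4 * t + 6))) _ _ _ _ hu
  · intro t
    have hp1 : HasDerivAt (fun t : ℝ => t ^ 2 - 4 * t + 2)
        ((2:ℕ) * t ^ (2 - 1) - 4 * 1) t :=
      ((hasDerivAt_pow 2 t).sub ((hasDerivAt_id' (𝕜 := ℝ) (x := t)).const_mul 4)).add_const 2
    have hE2 : HasDerivAt (fun t : ℝ => Real.exp t ^ 2)
        ((2:ℕ) * Real.exp t ^ (2 - 1) * Real.exp t) t :=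
      (Real.hasDerivAt_exp t).pow 2
    have hp2 : HasDerivAt (fun t : ℝ => t ^ 3 + t ^ 2 + 4 * t - 4)
        ((3:ℕ) * t ^ (3 - 1) + (2:ℕ) * t ^ (2 - 1) + 4 * 1) t :=
      (((hasDerivAt_pow 3 t).add (hasDerivAt_pow 2 t)).add
        ((hasDerivAt_id' (𝕜 := ℝ) (x := t)).const_mul 4)).sub_const 4
    have := ((hp1.mul hE2).add (hp2.mul (Real.hasDerivAt_exp t))).add_const 2
    exact this.congr_deriv (by push_cast; ring)
  · norm_num
  · intro t ht
    exact mul_nonneg (mul_nonneg ht (Real.exp_pos t).le) (hR t ht)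

lemma stmt6_hasDerivAt_g {u : ℝ} (hu : 0 < u) : HasDerivAt stmt6_g (stmt6_G1 u) u := by
  have hD := stmt6_D_pos hu
  have hnum : HasDerivAt (fun u : ℝ => u * (Real.exp u - 1))
      (1 * (Real.exp u - 1) + u * Real.exp u) u :=
    (hasDerivAt_id' (𝕜 := ℝ) (x := u)).mul ((Real.hasDerivAt_exp u).sub_const 1)
  have hden : HasDerivAt (fun u : ℝ => Real.exp u - u - 1) (Real.exp u - 1) u := by
    have := ((Real.hasDerivAt_exp u).sub (hasDerivAt_id' (𝕜 := ℝ) (x := u))).sub_const 1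
    exact this
  have h := hnum.div hden hD.ne'
  have heq : stmt6_g = fun u : ℝ => u * (Real.exp u - 1) / (Real.exp u - u - 1) := rfl
  rw [heq]
  refine h.congr_deriv ?_
  unfold stmt6_G1
  rw [div_eq_div_iff (by positivity) (by positivity)]
  ring

lemma stmt6_hasDerivAt_G1 {u : ℝ} (hu : 0 < u) : HasDerivAt stmt6_G1 (stmt6_G2 u) u := by
  have hD := stmt6_D_pos hu
  have hnum : HasDerivAt (fun u : ℝ => (Real.exp u - 1) ^ 2 - u ^ 2 * Real.exp u)
      ((2:ℕ) * (Real.exp u - 1) ^ (2 - 1) * Real.exp u -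
        ((2:ℕ) * u ^ (2 - 1) * Real.exp u + u ^ 2 * Real.exp u)) u :=
    (((Real.hasDerivAt_exp u).sub_const 1).pow 2).sub
      ((hasDerivAt_pow 2 u).mul (Real.hasDerivAt_exp u))
  have hden0 : HasDerivAt (fun u : ℝ => Real.exp u - u - 1) (Real.exp u - 1) u := by
    have := ((Real.hasDerivAt_exp u).sub (hasDerivAt_id' (𝕜 := ℝ) (x := u))).sub_const 1
    exact this
  have hden : HasDerivAt (fun u : ℝ => (Real.exp u - u - 1) ^ 2)
      ((2:ℕ) * (Real.exp u - u - 1) ^ (2 - 1) * (Real.exp u - 1)) u := hden0.pow 2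
  have h := hnum.div hden (by positivity)
  have heq : stmt6_G1 = fun u : ℝ =>
      ((Real.exp u - 1) ^ 2 - u ^ 2 * Real.exp u) / (Real.exp u - u - 1) ^ 2 := rfl
  rw [heq]
  refine h.congr_deriv ?_
  unfold stmt6_G2
  rw [div_eq_div_iff (by positivity) (by positivity)]
  push_cast; ring

lemma stmt6_G1_pos {u : ℝ} (hu : 0 < u) : 0 < stmt6_G1 u :=
  div_pos (stmt6_P_pos hu) (pow_pos (stmt6_D_pos hu) 2)

lemma stmt6_G2_nonneg {u : ℝ} (hu : 0 < u) : 0 ≤ stmt6_G2 u := by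
  have hD := stmt6_D_pos hu
  exact div_nonneg (stmt6_Q_nonneg hu.le) (by positivity)

lemma stmt6_strictMonoOn_g : StrictMonoOn stmt6_g (Ioi 0) := by
  apply strictMonoOn_of_deriv_pos (convex_Ioi 0)
  · exact fun u hu => (stmt6_hasDerivAt_g hu).continuousAt.continuousWithinAt
  · intro u hu
    rw [interior_Ioi] at hu
    rw [(stmt6_hasDerivAt_g hu).deriv]
    exact stmt6_G1_pos hu

lemma stmt6_convexOn_g : ConvexOn ℝ (Ioi 0) stmt6_g := by
  apply MonotoneOn.convexOn_of_deriv (convex_Ioi 0)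
  · exact fun u hu => (stmt6_hasDerivAt_g hu).continuousAt.continuousWithinAt
  · rw [interior_Ioi]
    exact fun u hu => (stmt6_hasDerivAt_g hu).differentiableAt.differentiableWithinAt
  · rw [interior_Ioi]
    have hmono : MonotoneOn stmt6_G1 (Ioi 0) := by
      apply monotoneOn_of_deriv_nonneg (convex_Ioi 0)
        (fun u hu => (stmt6_hasDerivAt_G1 hu).continuousAt.continuousWithinAt)
      · rw [interior_Ioi]
        exact fun u hu => (stmt6_hasDerivAt_G1 hu).differentiableAt.differentiableWithinAt
      · intro u hu
        rw [interior_Ioi] at hu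
        rw [(stmt6_hasDerivAt_G1 hu).deriv]
        exact stmt6_G2_nonneg hu
    intro u hu v hv huv
    rw [(stmt6_hasDerivAt_g hu).deriv, (stmt6_hasDerivAt_g hv).deriv]
    exact hmono hu hv huv

/-- With `f(u) = e^u - u - 1` and `ζ(x)` the unique positive root of
`ζ(e^ζ-1)/f(ζ) = x` for `x > 2`, the function `ζ` is concave on `(2, ∞)`,
i.e. `ζ''(x) ≤ 0` for all `x > 2`. -/
theorem stmt_6 (f ζ : ℝ → ℝ)
    (hf : ∀ u, f u = Real.exp u - u - 1)
    (hζ : ∀ x > 2, 0 < ζ x ∧ ζ x * (Real.exp (ζ x) - 1) / f (ζ x) = x) :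
    ConcaveOn ℝ (Set.Ioi 2) ζ ∧ ∀ x > 2, deriv (deriv ζ) x ≤ 0 := by
  have key : ∀ x, 2 < x → stmt6_g (ζ x) = x := by
    intro x hx
    have h := (hζ x hx).2
    rw [hf] at h
    exact h
  have hpos : ∀ x, 2 < x → 0 < ζ x := fun x hx => (hζ x hx).1
  constructor
  · refine ⟨convex_Ioi 2, ?_⟩
    intro x hx y hy a b ha hb hab
    rw [mem_Ioi] at hx hy
    have hu := hpos x hx
    have hv := hpos y hy
    have hw : (2:ℝ) < a * x + b * y := by
      rcases eq_or_lt_of_le ha with ha0 | ha0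
      · rw [← ha0] at hab ⊢; simp at hab; rw [hab]; linarith
      · nlinarith
    have hw0 := hpos _ hw
    have hmem : a * ζ x + b * ζ y ∈ Ioi (0:ℝ) :=
      (convex_Ioi 0) (mem_Ioi.mpr hu) (mem_Ioi.mpr hv) ha hb hab
    have hle : stmt6_g (a * ζ x + b * ζ y) ≤ a * stmt6_g (ζ x) + b * stmt6_g (ζ y) := by
      have := stmt6_convexOn_g.2 (mem_Ioi.mpr hu) (mem_Ioi.mpr hv) ha hb hab
      simpa using this
    rw [key x hx, key y hy] at hle
    rw [← key _ hw] at hle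
    have := (stmt6_strictMonoOn_g.le_iff_le hmem (mem_Ioi.mpr hw0)).mp hle
    simpa [smul_eq_mul] using this
  · -- second derivative part
    have hcont : ∀ x, 2 < x → ContinuousAt ζ x := by
      intro x hx
      rw [Metric.continuousAt_iff]
      intro ε hε
      set u := ζ x with hu_def
      have hu := hpos x hx
      set ε' : ℝ := min ε (u / 2) with hε'_def
      have hε' : 0 < ε' := lt_min hε (by linarith)
      have hε'u : 0 < u - ε' := by
        have : ε' ≤ u / 2 := min_le_right _ _
        linarith
      have ha : stmt6_g (u - ε') < x := by
        have := stmt6_strictMonoOn_g (mem_Ioi.mpr hε'u) (mem_Ioi.mpr hu) (by linarith)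
        rwa [key x hx] at this
      have hb : x < stmt6_g (u + ε') := by
        have := stmt6_strictMonoOn_g (mem_Ioi.mpr hu) (mem_Ioi.mpr (by linarith : (0:ℝ) < u + ε'))
          (by linarith)
        rwa [key x hx] at this
      refine ⟨min (min (x - stmt6_g (u - ε')) (stmt6_g (u + ε') - x)) (x - 2), by
        apply lt_min (lt_min (by linarith) (by linarith)) (by linarith), ?_⟩
      intro z hz
      rw [Real.dist_eq] at hz
      have h1 : |z - x| < x - stmt6_g (u - ε') :=
        lt_of_lt_of_le hz (le_trans (min_le_left _ _) (min_le_left _ _))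
      have h2 : |z - x| < stmt6_g (u + ε') - x :=
        lt_of_lt_of_le hz (le_trans (min_le_left _ _) (min_le_right _ _))
      have h3 : |z - x| < x - 2 := lt_of_lt_of_le hz (min_le_right _ _)
      rw [abs_lt] at h1 h2 h3
      have hz2 : 2 < z := by linarith
      have hzu := hpos z hz2
      have hga : stmt6_g (u - ε') < stmt6_g (ζ z) := by rw [key z hz2]; linarith
      have hgb : stmt6_g (ζ z) < stmt6_g (u + ε') := by rw [key z hz2]; linarith
      have hlt1 : u - ε' < ζ z :=
        (stmt6_strictMonoOn_g.lt_iff_lt (mem_Ioi.mpr hε'u) (mem_Ioi.mpr hzu)).mp hga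
      have hlt2 : ζ z < u + ε' :=
        (stmt6_strictMonoOn_g.lt_iff_lt (mem_Ioi.mpr hzu)
          (mem_Ioi.mpr (by linarith : (0:ℝ) < u + ε'))).mp hgb
      rw [Real.dist_eq, abs_lt]
      constructor
      · have : ε' ≤ ε := min_le_left _ _
        linarith
      · have : ε' ≤ ε := min_le_left _ _
        linarith
    have hζd : ∀ x, 2 < x → HasDerivAt ζ (stmt6_G1 (ζ x))⁻¹ x := by
      intro x hx
      apply HasDerivAt.of_local_left_inverse (hcont x hx)
        (stmt6_hasDerivAt_g (hpos x hx)) (stmt6_G1_pos (hpos x hx)).ne'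
      filter_upwards [Ioi_mem_nhds hx] with y hy
      exact key y hy
    intro x hx
    have hu := hpos x hx
    have hEq : deriv ζ =ᶠ[nhds x] fun y => (stmt6_G1 (ζ y))⁻¹ := by
      filter_upwards [Ioi_mem_nhds hx] with y hy
      exact (hζd y hy).deriv
    rw [hEq.deriv_eq]
    have hcomp : HasDerivAt (fun y => stmt6_G1 (ζ y))
        (stmt6_G2 (ζ x) * (stmt6_G1 (ζ x))⁻¹) x :=
      HasDerivAt.comp x (stmt6_hasDerivAt_G1 hu) (hζd x hx)
    have hinv := hcomp.inv (stmt6_G1_pos hu).ne'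
    rw [HasDerivAt.deriv (f := fun y => (stmt6_G1 (ζ y))⁻¹) hinv]
    have hnum : 0 ≤ stmt6_G2 (ζ x) * (stmt6_G1 (ζ x))⁻¹ :=
      mul_nonneg (stmt6_G2_nonneg hu) (inv_nonneg.mpr (stmt6_G1_pos hu).le)
    exact div_nonpos_of_nonpos_of_nonneg (neg_nonpos.mpr hnum) (sq_nonneg _)
end

section
/- Let f(u) = e^u − u − 1 and define H(u) = log f(u) − u − 2 log u = log((e^u − u − 1)/(u² e^u)) for u > 0. Then H is convex on (0, ∞): H''(u) = (2e^{2u} + u²e^u + u² + 4u + 2 − u³e^u − 4ue^u − 4e^u)/(u² f(u)²) ≥ 0 for all u > 0. -/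
open Real Set

noncomputable def sN (u : ℝ) : ℝ :=
  2 * Real.exp (2 * u) + u ^ 2 * Real.exp u + u ^ 2 + 4 * u + 2
    - u ^ 3 * Real.exp u - 4 * u * Real.exp u - 4 * Real.exp u

noncomputable def sN1 (u : ℝ) : ℝ :=
  4 * Real.exp (2 * u) - Real.exp u * (u ^ 3 + 2 * u ^ 2 + 2 * u + 8) + 2 * u + 4

noncomputable def sN2 (u : ℝ) : ℝ :=
  8 * Real.exp (2 * u) - Real.exp u * (u ^ 3 + 5 * u ^ 2 + 6 * u + 10) + 2

lemma hE2 (x : ℝ) : HasDerivAt (fun y : ℝ => Real.exp (2 * y)) (2 * Real.exp (2 * x)) x := by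
  have h := (Real.hasDerivAt_exp (2 * x)).comp x ((hasDerivAt_id x).const_mul 2)
  simp only [Function.comp_def, id_eq] at h
  refine h.congr_deriv ?_
  ring

lemma chain_nonneg (g g' : ℝ → ℝ) (hd : ∀ u, HasDerivAt g (g' u) u) (h0 : g 0 = 0)
    (hg' : ∀ u, 0 ≤ u → 0 ≤ g' u) : ∀ u, 0 ≤ u → 0 ≤ g u := by
  intro u hu
  have hdiff : Differentiable ℝ g := fun x => (hd x).differentiableAt
  have hm : MonotoneOn g (Set.Ici 0) := by
    refine monotoneOn_of_deriv_nonneg (convex_Ici 0) hdiff.continuous.continuousOn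
      (hdiff.differentiableOn.mono interior_subset) ?_
    intro x hx
    rw [(hd x).deriv]
    exact hg' x (le_of_lt (by simpa using hx))
  simpa [h0] using hm Set.self_mem_Ici hu hu

lemma sN2_deriv (x : ℝ) : HasDerivAt sN2
    (16 * Real.exp (2 * x) - Real.exp x * (x ^ 3 + 8 * x ^ 2 + 16 * x + 16)) x := by
  have hp : HasDerivAt (fun y : ℝ => y ^ 3 + 5 * y ^ 2 + 6 * y + 10)
      (3 * x ^ 2 + 5 * (2 * x) + 6) x := by
    have := (((hasDerivAt_pow 3 x).add ((hasDerivAt_pow 2 x).const_mul 5)).add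
      ((hasDerivAt_id x).const_mul 6)).add_const 10
    refine this.congr_deriv ?_
    push_cast; ring
  have := (((hE2 x).const_mul 8).sub ((Real.hasDerivAt_exp x).mul hp)).add_const 2
  refine this.congr_deriv ?_
  ring

lemma sN2_nonneg : ∀ u, 0 ≤ u → 0 ≤ sN2 u := by
  have key : ∀ u, 0 ≤ u →
      0 ≤ 16 * Real.exp (2 * u) - Real.exp u * (u ^ 3 + 8 * u ^ 2 + 16 * u + 16) := by
    intro u hu
    have hs := Real.sum_le_exp_of_nonneg hu 5
    simp [Finset.sum_range_succ] at hs
    norm_num [Nat.factorial] at hs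
    have h2 : Real.exp (2 * u) = Real.exp u * Real.exp u := by
      rw [two_mul, Real.exp_add]
    have he : (0:ℝ) < Real.exp u := Real.exp_pos u
    have h3 : 0 ≤ 16 * Real.exp u - (u ^ 3 + 8 * u ^ 2 + 16 * u + 16) := by
      nlinarith [pow_nonneg hu 3, pow_nonneg hu 4]
    rw [h2]
    nlinarith [mul_nonneg he.le h3]
  refine chain_nonneg sN2 _ sN2_deriv ?_ key
  unfold sN2; norm_num

lemma sN1_deriv (x : ℝ) : HasDerivAt sN1 (sN2 x) x := by
  have hp : HasDerivAt (fun y : ℝ => y ^ 3 + 2 * y ^ 2 + 2 * y + 8)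
      (3 * x ^ 2 + 2 * (2 * x) + 2) x := by
    have := (((hasDerivAt_pow 3 x).add ((hasDerivAt_pow 2 x).const_mul 2)).add
      ((hasDerivAt_id x).const_mul 2)).add_const 8
    refine this.congr_deriv ?_
    push_cast; ring
  have := ((((hE2 x).const_mul 4).sub ((Real.hasDerivAt_exp x).mul hp)).add
    ((hasDerivAt_id x).const_mul 2)).add_const 4
  refine this.congr_deriv ?_
  unfold sN2; ring

lemma sN1_nonneg : ∀ u, 0 ≤ u → 0 ≤ sN1 u := by
  refine chain_nonneg sN1 sN2 sN1_deriv ?_ sN2_nonneg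
  unfold sN1; norm_num

lemma sN_deriv (x : ℝ) : HasDerivAt sN (sN1 x) x := by
  have h1 := (hE2 x).const_mul 2
  have h2 := (hasDerivAt_pow 2 x).mul (Real.hasDerivAt_exp x)
  have h3 := hasDerivAt_pow 2 x
  have h4 := (hasDerivAt_id x).const_mul 4
  have h6 := (hasDerivAt_pow 3 x).mul (Real.hasDerivAt_exp x)
  have h7 := ((hasDerivAt_id x).const_mul 4).mul (Real.hasDerivAt_exp x)
  have h8 := (Real.hasDerivAt_exp x).const_mul 4
  have := ((((((h1.add h2).add h3).add h4).add_const 2).sub h6).sub h7).sub h8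
  refine this.congr_deriv ?_
  simp only [id_eq]; unfold sN1; push_cast; ring

lemma sN_nonneg : ∀ u, 0 ≤ u → 0 ≤ sN u := by
  refine chain_nonneg sN sN1 sN_deriv ?_ sN1_nonneg
  unfold sN; norm_num

/-- With `f(u) = e^u - u - 1` and `H(u) = log f(u) - u - 2 log u`, the
function `H` is convex on `(0, ∞)`, with
`H''(u) = (2e^{2u} + u²e^u + u² + 4u + 2 - u³e^u - 4ue^u - 4e^u)/(u² f(u)²) ≥ 0`. -/
theorem stmt_7 (f H : ℝ → ℝ)
    (hf : ∀ u, f u = Real.exp u - u - 1)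
    (hH : ∀ u, H u = Real.log (f u) - u - 2 * Real.log u) :
    ConvexOn ℝ (Set.Ioi 0) H ∧
    ∀ u > 0,
      deriv (deriv H) u =
        (2 * Real.exp (2 * u) + u ^ 2 * Real.exp u + u ^ 2 + 4 * u + 2
          - u ^ 3 * Real.exp u - 4 * u * Real.exp u - 4 * Real.exp u)
          / (u ^ 2 * f u ^ 2) ∧
      0 ≤ deriv (deriv H) u := by
  have hfpos : ∀ u : ℝ, 0 < u → 0 < Real.exp u - u - 1 := by
    intro u hu
    nlinarith [Real.add_one_lt_exp (ne_of_gt hu)]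
  set G : ℝ → ℝ := fun u =>
    (Real.exp u - 1) / (Real.exp u - u - 1) - 1 - 2 * u⁻¹ with hG
  set D : ℝ → ℝ := fun u => sN u / (u ^ 2 * (Real.exp u - u - 1) ^ 2) with hD
  have hHeq : H = fun u => Real.log (Real.exp u - u - 1) - u - 2 * Real.log u := by
    funext u; rw [hH, hf]
  have hHd : ∀ u : ℝ, 0 < u → HasDerivAt H (G u) u := by
    intro u hu
    have h1 : HasDerivAt (fun y : ℝ => Real.exp y - y - 1) (Real.exp u - 1) u := by
      simpa using ((Real.hasDerivAt_exp u).sub (hasDerivAt_id u)).sub_const 1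
    have h2 := h1.log (ne_of_gt (hfpos u hu))
    have h3 := (Real.hasDerivAt_log (ne_of_gt hu)).const_mul 2
    rw [hHeq]
    have := (h2.sub (hasDerivAt_id u)).sub h3
    exact this
  have hGd : ∀ u : ℝ, 0 < u → HasDerivAt G (D u) u := by
    intro u hu
    have h1 : HasDerivAt (fun y : ℝ => Real.exp y - y - 1) (Real.exp u - 1) u := by
      simpa using ((Real.hasDerivAt_exp u).sub (hasDerivAt_id u)).sub_const 1
    have h2 : HasDerivAt (fun y : ℝ => Real.exp y - 1) (Real.exp u) u := by
      simpa using (Real.hasDerivAt_exp u).sub_const 1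
    have hq := h2.div h1 (ne_of_gt (hfpos u hu))
    have hi := (hasDerivAt_inv (ne_of_gt hu)).const_mul 2
    have := (hq.sub_const 1).sub hi
    refine this.congr_deriv ?_
    have hfne : Real.exp u - u - 1 ≠ 0 := ne_of_gt (hfpos u hu)
    have hune : u ≠ 0 := ne_of_gt hu
    have h2u : Real.exp (2 * u) = Real.exp u * Real.exp u := by
      rw [two_mul, Real.exp_add]
    rw [hD]
    simp only [sN, h2u]
    field_simp
    ring
  have hdH : ∀ u : ℝ, 0 < u → deriv H u = G u := fun u hu => (hHd u hu).deriv
  have hd2 : ∀ u : ℝ, 0 < u → deriv (deriv H) u = D u := by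
    intro u hu
    have hev : deriv H =ᶠ[nhds u] G :=
      Filter.eventuallyEq_of_mem (isOpen_Ioi.mem_nhds hu) (fun x hx => hdH x hx)
    rw [hev.deriv_eq]
    exact (hGd u hu).deriv
  constructor
  · refine convexOn_of_hasDerivWithinAt2_nonneg (convex_Ioi 0) ?_ (f' := G) (f'' := D) ?_ ?_ ?_
    · exact fun u hu => ((hHd u hu).continuousAt).continuousWithinAt
    · rw [interior_Ioi]
      exact fun x hx => (hHd x hx).hasDerivWithinAt
    · rw [interior_Ioi]
      exact fun x hx => (hGd x hx).hasDerivWithinAt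
    · rw [interior_Ioi]
      intro x hx
      exact div_nonneg (sN_nonneg x (le_of_lt hx)) (by positivity)
  · intro u hu
    have h := hd2 u hu
    have hval : D u =
        (2 * Real.exp (2 * u) + u ^ 2 * Real.exp u + u ^ 2 + 4 * u + 2
          - u ^ 3 * Real.exp u - 4 * u * Real.exp u - 4 * Real.exp u)
          / (u ^ 2 * f u ^ 2) := by
      rw [hD, hf]; rfl
    refine ⟨by rw [h, hval], ?_⟩
    rw [h, hD]
    exact div_nonneg (sN_nonneg u (le_of_lt hu)) (by positivity)
end

section
/- Let f(u) = e^u − u − 1 and for y > 2 let ζ(y) > 0 be the unique positive solution of u(e^u − 1)/f(u) = y. Then for all y > 2, f(ζ(y))/ζ(y)^y ≤ 3/4. -/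
lemma bern1 (z : ℝ) (h1 : 0 ≤ z) (h2 : z ≤ 3) :
    (6-2*z)*(1 + z/3 + (z/3)^2/2 + (z/3)^3/6 + (z/3)^4/24 + (z/3)^5/120 + (z/3)^6*(7/4320))^3 ≤ z^2+4*z+6 := by
  have hu : (0:ℝ) ≤ z - 0 := by linarith
  have hv : (0:ℝ) ≤ 3/1 - z := by linarith
  linarith [mul_nonneg (mul_nonneg (by norm_num : (0:ℝ) ≤ (1:ℝ)/13947137604) (pow_nonneg hu 4)) (pow_nonneg hv 19),
    mul_nonneg (mul_nonneg (by norm_num : (0:ℝ) ≤ (101:ℝ)/69735688020) (pow_nonneg hu 5)) (pow_nonneg hv 18),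
    mul_nonneg (mul_nonneg (by norm_num : (0:ℝ) ≤ (313469:ℝ)/22594362918480) (pow_nonneg hu 6)) (pow_nonneg hv 17),
    mul_nonneg (mul_nonneg (by norm_num : (0:ℝ) ≤ (315469:ℝ)/3765727153080) (pow_nonneg hu 7)) (pow_nonneg hv 16),
    mul_nonneg (mul_nonneg (by norm_num : (0:ℝ) ≤ (16154591:ℝ)/45188725836960) (pow_nonneg hu 8)) (pow_nonneg hv 15),
    mul_nonneg (mul_nonneg (by norm_num : (0:ℝ) ≤ (51765499:ℝ)/45188725836960) (pow_nonneg hu 9)) (pow_nonneg hv 14),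
    mul_nonneg (mul_nonneg (by norm_num : (0:ℝ) ≤ (3875251937:ℝ)/1355661775108800) (pow_nonneg hu 10)) (pow_nonneg hv 13),
    mul_nonneg (mul_nonneg (by norm_num : (0:ℝ) ≤ (7706526029:ℝ)/1355661775108800) (pow_nonneg hu 11)) (pow_nonneg hv 12),
    mul_nonneg (mul_nonneg (by norm_num : (0:ℝ) ≤ (892404417953:ℝ)/97607647807833600) (pow_nonneg hu 12)) (pow_nonneg hv 11),
    mul_nonneg (mul_nonneg (by norm_num : (0:ℝ) ≤ (1171039556683:ℝ)/97607647807833600) (pow_nonneg hu 13)) (pow_nonneg hv 10),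
    mul_nonneg (mul_nonneg (by norm_num : (0:ℝ) ≤ (1259002348687:ℝ)/97607647807833600) (pow_nonneg hu 14)) (pow_nonneg hv 9),
    mul_nonneg (mul_nonneg (by norm_num : (0:ℝ) ≤ (33270804333697:ℝ)/2928229434235008000) (pow_nonneg hu 15)) (pow_nonneg hv 8),
    mul_nonneg (mul_nonneg (by norm_num : (0:ℝ) ≤ (95658668518139:ℝ)/11712917736940032000) (pow_nonneg hu 16)) (pow_nonneg hv 7),
    mul_nonneg (mul_nonneg (by norm_num : (0:ℝ) ≤ (55617872366477:ℝ)/11712917736940032000) (pow_nonneg hu 17)) (pow_nonneg hv 6),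
    mul_nonneg (mul_nonneg (by norm_num : (0:ℝ) ≤ (2783919818711177:ℝ)/1264995115589523456000) (pow_nonneg hu 18)) (pow_nonneg hv 5),
    mul_nonneg (mul_nonneg (by norm_num : (0:ℝ) ≤ (251274505551587:ℝ)/316248778897380864000) (pow_nonneg hu 19)) (pow_nonneg hv 4),
    mul_nonneg (mul_nonneg (by norm_num : (0:ℝ) ≤ (45432414523871:ℝ)/210832519264920576000) (pow_nonneg hu 20)) (pow_nonneg hv 3),
    mul_nonneg (mul_nonneg (by norm_num : (0:ℝ) ≤ (653405029339:ℝ)/15812438944869043200) (pow_nonneg hu 21)) (pow_nonneg hv 2),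
    mul_nonneg (mul_nonneg (by norm_num : (0:ℝ) ≤ (6321887658593:ℝ)/1264995115589523456000) (pow_nonneg hu 22)) (pow_nonneg hv 1),
    mul_nonneg (mul_nonneg (by norm_num : (0:ℝ) ≤ (1:ℝ)/3486784401) (pow_nonneg hu 23)) (pow_nonneg hv 0)]

lemma bern2 (z : ℝ) (h1 : 0 ≤ z) (h2 : z ≤ 1) :
    2*z^2+7*z+10 ≤ (10-3*z)*(1 + z + (z)^2/2 + (z)^3/6 + (z)^4/24 + (z)^5/120 + (z)^6/720 + (z)^7/5040) := by
  have hu : (0:ℝ) ≤ z - 0 := by linarith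
  have hv : (0:ℝ) ≤ 1/1 - z := by linarith
  linarith [mul_nonneg (mul_nonneg (by norm_num : (0:ℝ) ≤ (1:ℝ)/6) (pow_nonneg hu 3)) (pow_nonneg hv 7),
    mul_nonneg (mul_nonneg (by norm_num : (0:ℝ) ≤ (13:ℝ)/12) (pow_nonneg hu 4)) (pow_nonneg hv 6),
    mul_nonneg (mul_nonneg (by norm_num : (0:ℝ) ≤ (71:ℝ)/24) (pow_nonneg hu 5)) (pow_nonneg hv 5),
    mul_nonneg (mul_nonneg (by norm_num : (0:ℝ) ≤ (1571:ℝ)/360) (pow_nonneg hu 6)) (pow_nonneg hv 4),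
    mul_nonneg (mul_nonneg (by norm_num : (0:ℝ) ≤ (3733:ℝ)/1008) (pow_nonneg hu 7)) (pow_nonneg hv 3),
    mul_nonneg (mul_nonneg (by norm_num : (0:ℝ) ≤ (739:ℝ)/420) (pow_nonneg hu 8)) (pow_nonneg hv 2),
    mul_nonneg (mul_nonneg (by norm_num : (0:ℝ) ≤ (2047:ℝ)/5040) (pow_nonneg hu 9)) (pow_nonneg hv 1),
    mul_nonneg (mul_nonneg (by norm_num : (0:ℝ) ≤ (1:ℝ)/36) (pow_nonneg hu 10)) (pow_nonneg hv 0)]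

lemma bern3 (z : ℝ) (h1 : 0 ≤ z) (h2 : z ≤ 1) :
    (1 + z + (z)^2/2 + (z)^3/6 + (z)^4/24 + (z)^5/120 + (z)^6*(7/4320)) ≤ 3/20*z^2*(z^2+4)+z+1 := by
  have hu : (0:ℝ) ≤ z - 0 := by linarith
  have hv : (0:ℝ) ≤ 1/1 - z := by linarith
  linarith [mul_nonneg (mul_nonneg (by norm_num : (0:ℝ) ≤ (1:ℝ)/10) (pow_nonneg hu 2)) (pow_nonneg hv 6),
    mul_nonneg (mul_nonneg (by norm_num : (0:ℝ) ≤ (13:ℝ)/30) (pow_nonneg hu 3)) (pow_nonneg hv 5),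
    mul_nonneg (mul_nonneg (by norm_num : (0:ℝ) ≤ (31:ℝ)/40) (pow_nonneg hu 4)) (pow_nonneg hv 4),
    mul_nonneg (mul_nonneg (by norm_num : (0:ℝ) ≤ (91:ℝ)/120) (pow_nonneg hu 5)) (pow_nonneg hv 3),
    mul_nonneg (mul_nonneg (by norm_num : (0:ℝ) ≤ (1973:ℝ)/4320) (pow_nonneg hu 6)) (pow_nonneg hv 2),
    mul_nonneg (mul_nonneg (by norm_num : (0:ℝ) ≤ (371:ℝ)/2160) (pow_nonneg hu 7)) (pow_nonneg hv 1),
    mul_nonneg (mul_nonneg (by norm_num : (0:ℝ) ≤ (137:ℝ)/4320) (pow_nonneg hu 8)) (pow_nonneg hv 0)]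

lemma bern4 (s : ℝ) (h1 : 0 ≤ s) (h2 : s ≤ 6/5) :
    (3-s)*(1 + 2*s/3 + (2*s/3)^2/2 + (2*s/3)^3/6 + (2*s/3)^4/24 + (2*s/3)^5/120 + (2*s/3)^6*(7/4320))^3 ≤ 4*s*(1 + s + (s)^2/2 + (s)^3/6 + (s)^4/24 + (s)^5/120 + (s)^6/720 + (s)^7/5040)+s+3 := by
  have hu : (0:ℝ) ≤ s - 0 := by linarith
  have hv : (0:ℝ) ≤ 6/5 - s := by linarith
  linarith [mul_nonneg (mul_nonneg (by norm_num : (0:ℝ) ≤ (762939453125:ℝ)/609359740010496) (pow_nonneg hu 5)) (pow_nonneg hv 18),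
    mul_nonneg (mul_nonneg (by norm_num : (0:ℝ) ≤ (444793701171875:ℝ)/18509302102818816) (pow_nonneg hu 6)) (pow_nonneg hv 17),
    mul_nonneg (mul_nonneg (by norm_num : (0:ℝ) ≤ (32272186279296875:ℝ)/148074416822550528) (pow_nonneg hu 7)) (pow_nonneg hv 16),
    mul_nonneg (mul_nonneg (by norm_num : (0:ℝ) ≤ (321597723388671875:ℝ)/259130229439463424) (pow_nonneg hu 8)) (pow_nonneg hv 15),
    mul_nonneg (mul_nonneg (by norm_num : (0:ℝ) ≤ (644249918212890625:ℝ)/129565114719731712) (pow_nonneg hu 9)) (pow_nonneg hv 14),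
    mul_nonneg (mul_nonneg (by norm_num : (0:ℝ) ≤ (1653115352099609375:ℝ)/111055812616912896) (pow_nonneg hu 10)) (pow_nonneg hv 13),
    mul_nonneg (mul_nonneg (by norm_num : (0:ℝ) ≤ (1916042628212890625:ℝ)/55527906308456448) (pow_nonneg hu 11)) (pow_nonneg hv 12),
    mul_nonneg (mul_nonneg (by norm_num : (0:ℝ) ≤ (63300638848357421875:ℝ)/999502313552216064) (pow_nonneg hu 12)) (pow_nonneg hv 11),
    mul_nonneg (mul_nonneg (by norm_num : (0:ℝ) ≤ (62169754244230859375:ℝ)/666334875701477376) (pow_nonneg hu 13)) (pow_nonneg hv 10),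
    mul_nonneg (mul_nonneg (by norm_num : (0:ℝ) ≤ (111097746277685234375:ℝ)/999502313552216064) (pow_nonneg hu 14)) (pow_nonneg hv 9),
    mul_nonneg (mul_nonneg (by norm_num : (0:ℝ) ≤ (4506068358785432253125:ℝ)/41979097169193074688) (pow_nonneg hu 15)) (pow_nonneg hv 8),
    mul_nonneg (mul_nonneg (by norm_num : (0:ℝ) ≤ (586508041624611641875:ℝ)/6996516194865512448) (pow_nonneg hu 16)) (pow_nonneg hv 7),
    mul_nonneg (mul_nonneg (by norm_num : (0:ℝ) ≤ (4924136073312006625:ℝ)/93703341895520256) (pow_nonneg hu 17)) (pow_nonneg hv 6),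
    mul_nonneg (mul_nonneg (by norm_num : (0:ℝ) ≤ (2111838008804720354725:ℝ)/80959687397729501184) (pow_nonneg hu 18)) (pow_nonneg hv 5),
    mul_nonneg (mul_nonneg (by norm_num : (0:ℝ) ≤ (50738995503264430765:ℝ)/5059980462358093824) (pow_nonneg hu 19)) (pow_nonneg hv 4),
    mul_nonneg (mul_nonneg (by norm_num : (0:ℝ) ≤ (77736859827136741195:ℝ)/26986562465909833728) (pow_nonneg hu 20)) (pow_nonneg hv 3),
    mul_nonneg (mul_nonneg (by norm_num : (0:ℝ) ≤ (188579358128629761385:ℝ)/323838749590918004736) (pow_nonneg hu 21)) (pow_nonneg hv 2),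
    mul_nonneg (mul_nonneg (by norm_num : (0:ℝ) ≤ (41896141991596190845:ℝ)/566717811784106508288) (pow_nonneg hu 22)) (pow_nonneg hv 1),
    mul_nonneg (mul_nonneg (by norm_num : (0:ℝ) ≤ (3351867442549973465:ℝ)/755623749045475344384) (pow_nonneg hu 23)) (pow_nonneg hv 0)]

lemma bern5 (z : ℝ) (h1 : 1 ≤ z) (h2 : z ≤ 3) :
    6*((1 + z/3 + (z/3)^2/2 + (z/3)^3/6 + (z/3)^4/24 + (z/3)^5/120 + (z/3)^6*(7/4320))^3 - z - 1)*(z^2+4*z+1)^3 ≤ 3/4*z^2*(6*(z^2+4*z+1)^3+6*(z^3-z)*(z^2+4*z+1)^2+3*(z^3-z)^2*(z^2+4*z+1)+(z^3-z)^3) := by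
  have hu : (0:ℝ) ≤ z - 1 := by linarith
  have hv : (0:ℝ) ≤ 3/1 - z := by linarith
  linarith [mul_nonneg (mul_nonneg (by norm_num : (0:ℝ) ≤ (7925271031780669:ℝ)/51755759898040914149376) (pow_nonneg hu 0)) (pow_nonneg hv 28),
    mul_nonneg (mul_nonneg (by norm_num : (0:ℝ) ≤ (142653178626483347:ℝ)/25877879949020457074688) (pow_nonneg hu 1)) (pow_nonneg hv 27),
    mul_nonneg (mul_nonneg (by norm_num : (0:ℝ) ≤ (12427579531779708437:ℝ)/129389399745102285373440) (pow_nonneg hu 2)) (pow_nonneg hv 26),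
    mul_nonneg (mul_nonneg (by norm_num : (0:ℝ) ≤ (3501915141530536538663:ℝ)/3234734993627557134336000) (pow_nonneg hu 3)) (pow_nonneg hv 25),
    mul_nonneg (mul_nonneg (by norm_num : (0:ℝ) ≤ (172698569881256524505633:ℝ)/19408409961765342806016000) (pow_nonneg hu 4)) (pow_nonneg hv 24),
    mul_nonneg (mul_nonneg (by norm_num : (0:ℝ) ≤ (276286834418838031899061:ℝ)/4852102490441335701504000) (pow_nonneg hu 5)) (pow_nonneg hv 23),
    mul_nonneg (mul_nonneg (by norm_num : (0:ℝ) ≤ (12898816688629071176061787:ℝ)/43668922413972021313536000) (pow_nonneg hu 6)) (pow_nonneg hv 22),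
    mul_nonneg (mul_nonneg (by norm_num : (0:ℝ) ≤ (55669095625975917576298597:ℝ)/43668922413972021313536000) (pow_nonneg hu 7)) (pow_nonneg hv 21),
    mul_nonneg (mul_nonneg (by norm_num : (0:ℝ) ≤ (271069737298900599906052601:ℝ)/58225229885296028418048000) (pow_nonneg hu 8)) (pow_nonneg hv 20),
    mul_nonneg (mul_nonneg (by norm_num : (0:ℝ) ≤ (1270215149873432058169363739:ℝ)/87337844827944042627072000) (pow_nonneg hu 9)) (pow_nonneg hv 19),
    mul_nonneg (mul_nonneg (by norm_num : (0:ℝ) ≤ (3417533972872311866279430641:ℝ)/87337844827944042627072000) (pow_nonneg hu 10)) (pow_nonneg hv 18),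
    mul_nonneg (mul_nonneg (by norm_num : (0:ℝ) ≤ (294513906462697770464404657:ℝ)/3234734993627557134336000) (pow_nonneg hu 11)) (pow_nonneg hv 17),
    mul_nonneg (mul_nonneg (by norm_num : (0:ℝ) ≤ (396012904435085791815149977:ℝ)/2156489995751704756224000) (pow_nonneg hu 12)) (pow_nonneg hv 16),
    mul_nonneg (mul_nonneg (by norm_num : (0:ℝ) ≤ (17328339123310563793264679:ℝ)/53912249893792618905600) (pow_nonneg hu 13)) (pow_nonneg hv 15),
    mul_nonneg (mul_nonneg (by norm_num : (0:ℝ) ≤ (14623621916895035981050997:ℝ)/29951249940995899392000) (pow_nonneg hu 14)) (pow_nonneg hv 14),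
    mul_nonneg (mul_nonneg (by norm_num : (0:ℝ) ≤ (2140479509764494253763803:ℝ)/3327916660110655488000) (pow_nonneg hu 15)) (pow_nonneg hv 13),
    mul_nonneg (mul_nonneg (by norm_num : (0:ℝ) ≤ (11717815283693570507913991:ℝ)/15973999968531146342400) (pow_nonneg hu 16)) (pow_nonneg hv 12),
    mul_nonneg (mul_nonneg (by norm_num : (0:ℝ) ≤ (3205186343275079750549761:ℝ)/4437222213480873984000) (pow_nonneg hu 17)) (pow_nonneg hv 11),
    mul_nonneg (mul_nonneg (by norm_num : (0:ℝ) ≤ (2714330526232380174997243:ℝ)/4437222213480873984000) (pow_nonneg hu 18)) (pow_nonneg hv 10),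
    mul_nonneg (mul_nonneg (by norm_num : (0:ℝ) ≤ (1966073023414124415839809:ℝ)/4437222213480873984000) (pow_nonneg hu 19)) (pow_nonneg hv 9),
    mul_nonneg (mul_nonneg (by norm_num : (0:ℝ) ≤ (89560968377958327526643:ℝ)/328683126924509184000) (pow_nonneg hu 20)) (pow_nonneg hv 8),
    mul_nonneg (mul_nonneg (by norm_num : (0:ℝ) ≤ (3858243278815646258239:ℝ)/27390260577042432000) (pow_nonneg hu 21)) (pow_nonneg hv 7),
    mul_nonneg (mul_nonneg (by norm_num : (0:ℝ) ≤ (1654275359933840862233:ℝ)/27390260577042432000) (pow_nonneg hu 22)) (pow_nonneg hv 6),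
    mul_nonneg (mul_nonneg (by norm_num : (0:ℝ) ≤ (64170147980786100799:ℝ)/3043362286338048000) (pow_nonneg hu 23)) (pow_nonneg hv 5),
    mul_nonneg (mul_nonneg (by norm_num : (0:ℝ) ≤ (1579565325027149903:ℝ)/270521092118937600) (pow_nonneg hu 24)) (pow_nonneg hv 4),
    mul_nonneg (mul_nonneg (by norm_num : (0:ℝ) ≤ (2502826929114474853:ℝ)/2028908190892032000) (pow_nonneg hu 25)) (pow_nonneg hv 3),
    mul_nonneg (mul_nonneg (by norm_num : (0:ℝ) ≤ (42094468365052039:ℝ)/225434243432448000) (pow_nonneg hu 26)) (pow_nonneg hv 2),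
    mul_nonneg (mul_nonneg (by norm_num : (0:ℝ) ≤ (812925640640233:ℝ)/45086848686489600) (pow_nonneg hu 27)) (pow_nonneg hv 1),
    mul_nonneg (mul_nonneg (by norm_num : (0:ℝ) ≤ (376119502323283:ℝ)/450868486864896000) (pow_nonneg hu 28)) (pow_nonneg hv 0)]

lemma expUpper6 {x : ℝ} (h0 : 0 ≤ x) (h1 : x ≤ 1) :
    Real.exp x ≤ (1 + x + (x)^2/2 + (x)^3/6 + (x)^4/24 + (x)^5/120 + (x)^6*(7/4320)) := by
  have h := Real.exp_bound' h0 h1 (n := 6) (by norm_num)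
  norm_num [Finset.sum_range_succ, Nat.factorial] at h
  linarith

lemma expUpper3 {x : ℝ} (h0 : 0 ≤ x) (h3 : x ≤ 3) :
    Real.exp x ≤ (1 + x/3 + (x/3)^2/2 + (x/3)^3/6 + (x/3)^4/24 + (x/3)^5/120 + (x/3)^6*(7/4320))^3 := by
  have h := expUpper6 (x := x/3) (by linarith) (by linarith)
  have key : Real.exp x = Real.exp (x/3)^3 := by
    rw [show x = x/3 + (x/3 + x/3) by ring, Real.exp_add, Real.exp_add]; ring
  rw [key]
  exact pow_le_pow_left₀ (Real.exp_pos _).le h 3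

lemma expLower8 {x : ℝ} (h0 : 0 ≤ x) :
    (1 + x + (x)^2/2 + (x)^3/6 + (x)^4/24 + (x)^5/120 + (x)^6/720 + (x)^7/5040) ≤ Real.exp x := by
  have h := Real.sum_le_exp_of_nonneg h0 8
  norm_num [Finset.sum_range_succ, Nat.factorial] at h
  linarith

lemma expLower4 {x : ℝ} (h0 : 0 ≤ x) :
    1 + x + x^2/2 + x^3/6 ≤ Real.exp x := by
  have h := Real.sum_le_exp_of_nonneg h0 4
  norm_num [Finset.sum_range_succ, Nat.factorial] at h
  linarith

lemma zlnz {z : ℝ} (h0 : 0 < z) (h1 : z ≤ 1) : (z^2 - 1)/2 ≤ z * Real.log z := by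
  have hs0 : 0 ≤ -Real.log z := by
    have := Real.log_nonpos h0.le h1
    linarith
  have hzexp : Real.exp (Real.log z) = z := Real.exp_log h0
  have hE : 1 + (-Real.log z) + (-Real.log z)^2/2 ≤ Real.exp (-Real.log z) := by
    have h := Real.sum_le_exp_of_nonneg hs0 3
    norm_num [Finset.sum_range_succ, Nat.factorial] at h
    linarith
  have hprod : z * Real.exp (-Real.log z) = 1 := by
    rw [← hzexp, ← Real.exp_add]
    simp
  have hneg : 1 + 2*(-Real.log z)*Real.exp (-Real.log z) - Real.exp (-Real.log z)^2 ≤ 0 := by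
    nlinarith [hE, hs0, sq_nonneg (-Real.log z), sq_nonneg ((-Real.log z)^2),
      sq_nonneg (Real.exp (-Real.log z) - (-Real.log z) - 1 - (-Real.log z)^2/2)]
  have hkey : z^2 - 1 + 2*(-Real.log z)*z
      = z^2 * (1 + 2*(-Real.log z)*Real.exp (-Real.log z) - Real.exp (-Real.log z)^2) := by
    linear_combination (z*Real.exp (-Real.log z) + 1 - 2*(-Real.log z)*z) * hprod
  have hfin : z^2 - 1 + 2*(-Real.log z)*z ≤ 0 := by
    rw [hkey]
    exact mul_nonpos_of_nonneg_of_nonpos (sq_nonneg z) hneg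
  linarith

lemma logPade {z : ℝ} (h1 : 1 ≤ z) (h3 : z ≤ 3) :
    3*(z^2-1)/(z^2+4*z+1) ≤ Real.log z := by
  have hz0 : (0:ℝ) < z := by linarith
  have hs0 : 0 ≤ Real.log z := Real.log_nonneg h1
  set s : ℝ := Real.log z with hsdef
  have hzexp : Real.exp s = z := Real.exp_log hz0
  have hs65 : s ≤ 6/5 := by
    have h3e : (3:ℝ) ≤ Real.exp (6/5) := by
      have h := Real.sum_le_exp_of_nonneg (by norm_num : (0:ℝ) ≤ 6/5) 4
      norm_num [Finset.sum_range_succ, Nat.factorial] at h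
      linarith
    have hez : Real.exp s ≤ Real.exp (6/5) := by rw [hzexp]; linarith
    rwa [Real.exp_le_exp] at hez
  have hb := bern4 s hs0 hs65
  have hup : Real.exp (2*s) ≤ (1 + 2*s/3 + (2*s/3)^2/2 + (2*s/3)^3/6 + (2*s/3)^4/24 + (2*s/3)^5/120 + (2*s/3)^6*(7/4320))^3 := by
    have := expUpper3 (x := 2*s) (by linarith) (by linarith)
    convert this using 4 <;> ring
  have hlo : (1 + s + (s)^2/2 + (s)^3/6 + (s)^4/24 + (s)^5/120 + (s)^6/720 + (s)^7/5040) ≤ Real.exp s := expLower8 hs0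
  have h2s : Real.exp (2*s) = z^2 := by
    rw [show 2*s = s + s by ring, Real.exp_add, hzexp]; ring
  have hDpos : (0:ℝ) < z^2+4*z+1 := by nlinarith
  have t1 := mul_le_mul_of_nonneg_left hup (by linarith : (0:ℝ) ≤ 3 - s)
  have t2 := mul_le_mul_of_nonneg_left hlo (by linarith : (0:ℝ) ≤ 4*s)
  rw [h2s] at t1
  rw [hzexp] at t2
  rw [div_le_iff₀ hDpos]
  nlinarith [hb, t1, t2]

set_option maxHeartbeats 2000000 in
/-- With `f(u) = e^u - u - 1` and `ζ(y)` the unique positive root of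
`ζ(e^ζ-1)/f(ζ) = y` for `y > 2`, one has `f(ζ(y))/ζ(y)^y ≤ 3/4` for all `y > 2`. -/
theorem stmt_8 (f ζ : ℝ → ℝ)
    (hf : ∀ u, f u = Real.exp u - u - 1)
    (hζ : ∀ y > 2, 0 < ζ y ∧ ζ y * (Real.exp (ζ y) - 1) / f (ζ y) = y) :
    ∀ y > 2, f (ζ y) / ζ y ^ y ≤ 3 / 4 := by
  intro y hy
  obtain ⟨hz0, heq⟩ := hζ y hy
  rw [hf] at heq ⊢
  set z : ℝ := ζ y with hzdef
  have hf0 : (0:ℝ) < Real.exp z - z - 1 := by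
    have := Real.add_one_lt_exp (ne_of_gt hz0)
    linarith
  rw [div_eq_iff (ne_of_gt hf0)] at heq
  have heq' : z * (Real.exp z - 1) = y * (Real.exp z - z - 1) := heq
  have hrw : z ^ y = Real.exp (Real.log z * y) := Real.rpow_def_of_pos hz0 y
  rw [hrw, div_le_iff₀ (Real.exp_pos _)]
  -- goal : exp z - z - 1 ≤ 3/4 * exp (log z * y)
  have hyz : z < y := by
    have hk : (y - z) * (Real.exp z - z - 1) = z^2 := by linear_combination (-1 : ℝ) * heq'
    nlinarith [hf0, sq_nonneg z, pow_pos hz0 2]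
  have hy13 : 2 + z/3 ≤ y := by
    have hkey : (2 + z/3) * (Real.exp z - z - 1) ≤ z * (Real.exp z - 1) := by
      rcases le_or_gt z 3 with h3 | h3
      · have hb := bern1 z hz0.le h3
        have hup : Real.exp z ≤ (1 + z/3 + (z/3)^2/2 + (z/3)^3/6 + (z/3)^4/24 + (z/3)^5/120 + (z/3)^6*(7/4320))^3 := expUpper3 hz0.le h3
        nlinarith [mul_le_mul_of_nonneg_left hup (by linarith : (0:ℝ) ≤ 6 - 2*z)]
      · nlinarith [mul_nonneg (by linarith : (0:ℝ) ≤ 2*z - 6) (Real.exp_pos z).le]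
    exact le_of_mul_le_mul_right (by linarith) hf0
  rcases le_or_gt z 1 with h1 | h1
  · -- case 0 < z ≤ 1
    have hy25 : y ≤ 2 + 2*z/5 := by
      have hkey : z * (Real.exp z - 1) ≤ (2 + 2*z/5) * (Real.exp z - z - 1) := by
        have hb := bern2 z hz0.le h1
        have hlo : (1 + z + (z)^2/2 + (z)^3/6 + (z)^4/24 + (z)^5/120 + (z)^6/720 + (z)^7/5040) ≤ Real.exp z := expLower8 hz0.le
        nlinarith [mul_le_mul_of_nonneg_left hlo (by linarith : (0:ℝ) ≤ 10 - 3*z)]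
      exact le_of_mul_le_mul_right (by linarith) hf0
    have hlz : Real.log z ≤ 0 := Real.log_nonpos hz0.le h1
    have hm : Real.log z * (2 + 2*z/5) ≤ Real.log z * y := mul_le_mul_of_nonpos_left hy25 hlz
    have hchain : Real.exp (Real.log z * (2 + 2*z/5)) ≤ Real.exp (Real.log z * y) :=
      Real.exp_le_exp.2 hm
    have hzln : (z^2 - 1)/2 ≤ z * Real.log z := zlnz hz0 h1
    have hsplit : Real.exp (Real.log z * (2 + 2*z/5))
        = z^2 * Real.exp (Real.log z * (2*z/5)) := by
      rw [show Real.log z * (2 + 2*z/5)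
            = Real.log z + (Real.log z + Real.log z * (2*z/5)) by ring,
        Real.exp_add, Real.exp_add, Real.exp_log hz0]
      ring
    have hw : (z^2-1)/5 ≤ Real.log z * (2*z/5) := by nlinarith [hzln]
    have h1w : 1 + Real.log z * (2*z/5) ≤ Real.exp (Real.log z * (2*z/5)) := by
      linarith [Real.add_one_le_exp (Real.log z * (2*z/5))]
    have hlb : z^2 * ((z^2+4)/5) ≤ Real.exp (Real.log z * (2 + 2*z/5)) := by
      rw [hsplit]
      have : (z^2+4)/5 ≤ Real.exp (Real.log z * (2*z/5)) := by linarith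
      exact mul_le_mul_of_nonneg_left this (sq_nonneg z)
    have hpoly : Real.exp z - z - 1 ≤ 3/4 * (z^2 * ((z^2+4)/5)) := by
      have hb := bern3 z hz0.le h1
      have hup : Real.exp z ≤ (1 + z + (z)^2/2 + (z)^3/6 + (z)^4/24 + (z)^5/120 + (z)^6*(7/4320)) := expUpper6 hz0.le h1
      nlinarith [hb, hup]
    nlinarith [hchain, hlb, hpoly]
  · -- case z > 1
    have hlz : 0 ≤ Real.log z := Real.log_nonneg h1.le
    rcases le_or_gt z 3 with h3 | h3
    · -- 1 < z ≤ 3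
      have hm : Real.log z * (2 + z/3) ≤ Real.log z * y := mul_le_mul_of_nonneg_left hy13 hlz
      have hchain : Real.exp (Real.log z * (2 + z/3)) ≤ Real.exp (Real.log z * y) :=
        Real.exp_le_exp.2 hm
      have hD : (0:ℝ) < z^2+4*z+1 := by nlinarith
      set w : ℝ := (z^3 - z)/(z^2+4*z+1) with hwdef
      have hw0 : 0 ≤ w := by
        apply div_nonneg _ hD.le
        nlinarith
      have hpade := logPade h1.le h3
      have hp2 : 3*(z^2-1) ≤ Real.log z * (z^2+4*z+1) := by
        rw [div_le_iff₀ hD] at hpade; linarith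
      have hwle : w ≤ Real.log z * (z/3) := by
        rw [hwdef, div_le_iff₀ hD]
        nlinarith [mul_le_mul_of_nonneg_left hp2 (by linarith : (0:ℝ) ≤ z/3)]
      have hcub : 1 + w + w^2/2 + w^3/6 ≤ Real.exp (Real.log z * (z/3)) := by
        have hc1 := expLower4 hw0
        have hc2 := Real.exp_le_exp.2 hwle
        linarith
      have hsplit : Real.exp (Real.log z * (2 + z/3))
          = z^2 * Real.exp (Real.log z * (z/3)) := by
        rw [show Real.log z * (2 + z/3)
              = Real.log z + (Real.log z + Real.log z * (z/3)) by ring,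
          Real.exp_add, Real.exp_add, Real.exp_log hz0]
        ring
      have hpoly : Real.exp z - z - 1 ≤ 3/4 * (z^2 * (1 + w + w^2/2 + w^3/6)) := by
        have hb := bern5 z h1.le h3
        have hup : Real.exp z ≤ (1 + z/3 + (z/3)^2/2 + (z/3)^3/6 + (z/3)^4/24 + (z/3)^5/120 + (z/3)^6*(7/4320))^3 := expUpper3 hz0.le h3
        have hiden : 1 + w + w^2/2 + w^3/6
            = (6*(z^2+4*z+1)^3+6*(z^3-z)*(z^2+4*z+1)^2+3*(z^3-z)^2*(z^2+4*z+1)+(z^3-z)^3)/(6*(z^2+4*z+1)^3) := by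
          rw [hwdef]; field_simp; ring
        have hD3 : (0:ℝ) < 6*(z^2+4*z+1)^3 := by positivity
        rw [hiden, show (3:ℝ)/4 * (z^2 * ((6*(z^2+4*z+1)^3+6*(z^3-z)*(z^2+4*z+1)^2+3*(z^3-z)^2*(z^2+4*z+1)+(z^3-z)^3)/(6*(z^2+4*z+1)^3)))
              = 3/4*z^2*(6*(z^2+4*z+1)^3+6*(z^3-z)*(z^2+4*z+1)^2+3*(z^3-z)^2*(z^2+4*z+1)+(z^3-z)^3)/(6*(z^2+4*z+1)^3) by ring, le_div_iff₀ hD3]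
        linarith [hb, mul_le_mul_of_nonneg_right hup
          (by positivity : (0:ℝ) ≤ 6*(z^2+4*z+1)^3)]
      have hmono : z^2 * (1 + w + w^2/2 + w^3/6) ≤ z^2 * Real.exp (Real.log z * (z/3)) :=
        mul_le_mul_of_nonneg_left hcub (sq_nonneg z)
      linarith [hpoly, hmono, hchain, hsplit.le, hsplit.ge]
    · -- z > 3
      have hl3 : Real.log 3 ≤ Real.log z := by
        apply Real.log_le_log (by norm_num) h3.le
      have h13 : 1 ≤ Real.log 3 := by
        rw [Real.le_log_iff_exp_le (by norm_num : (0:ℝ) < 3)]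
        have := Real.exp_one_lt_d9
        norm_num at this ⊢
        linarith
      have hm : Real.log z * z ≤ Real.log z * y := mul_le_mul_of_nonneg_left hyz.le hlz
      have hm2 : Real.log 3 * z ≤ Real.log z * z :=
        mul_le_mul_of_nonneg_right hl3 (by linarith)
      have hm3 : 3*(Real.log 3 - 1) + z ≤ Real.log 3 * z := by
        nlinarith [mul_nonneg (by linarith : (0:ℝ) ≤ Real.log 3 - 1)
          (by linarith : (0:ℝ) ≤ z - 3)]
      have he3 : Real.exp (3*(Real.log 3 - 1)) = 27 / Real.exp 3 := by
        rw [show 3*(Real.log 3 - 1) = Real.log 3 + (Real.log 3 + Real.log 3) - 3 by ring,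
          Real.exp_sub, Real.exp_add, Real.exp_add,
          Real.exp_log (by norm_num : (0:ℝ) < 3)]
        norm_num
      have hcube : Real.exp 3 ≤ 81/4 := by
        have h := Real.exp_one_lt_d9
        have h3e : Real.exp 3 = Real.exp 1 * Real.exp 1 * Real.exp 1 := by
          rw [← Real.exp_add, ← Real.exp_add]; norm_num
        nlinarith [Real.exp_pos 1]
      have c1 : Real.exp (3*(Real.log 3 - 1) + z) ≤ Real.exp (Real.log z * y) :=
        Real.exp_le_exp.2 (by linarith)
      have c2 : Real.exp (3*(Real.log 3 - 1) + z) = 27 / Real.exp 3 * Real.exp z := by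
        rw [Real.exp_add, he3]
      have c3 : (4:ℝ)/3 * Real.exp z ≤ 27 / Real.exp 3 * Real.exp z := by
        apply mul_le_mul_of_nonneg_right _ (Real.exp_pos z).le
        rw [le_div_iff₀ (Real.exp_pos 3)]
        linarith
      nlinarith [c1, c2.le, c2.ge, c3, hz0, Real.exp_pos z]
end

section
/- Let f(u) = e^u − u − 1 and for y > 2 let ζ(y) > 0 be the unique positive solution of u(e^u − 1)/f(u) = y. Then ζ(y) ≤ 3(y − 2) for all y > 2. -/
private lemma aux_nonneg_of_deriv (g g' : ℝ → ℝ)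
    (hd : ∀ x, HasDerivAt g (g' x) x) (h0 : g 0 = 0)
    (hpos : ∀ x, 0 ≤ x → 0 ≤ g' x) : ∀ x, 0 ≤ x → 0 ≤ g x := by
  intro x hx
  have hmono : MonotoneOn g (Set.Ici (0:ℝ)) := by
    apply monotoneOn_of_deriv_nonneg (convex_Ici 0)
    · exact fun y _ => (hd y).continuousAt.continuousWithinAt
    · intro y hy
      exact (hd y).differentiableAt.differentiableWithinAt
    · intro y hy
      rw [interior_Ici] at hy
      rw [(hd y).deriv]
      exact hpos y (le_of_lt hy)
  have := hmono (Set.self_mem_Ici) (Set.mem_Ici.mpr hx) hx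
  rwa [h0] at this

private lemma aux_H_nonneg : ∀ u : ℝ, 0 ≤ u →
    0 ≤ (2*u - 6) * Real.exp u + u^2 + 4*u + 6 := by
  set H : ℝ → ℝ := fun u => (2*u - 6) * Real.exp u + u^2 + 4*u + 6 with hH
  set H1 : ℝ → ℝ := fun u => (2*u - 4) * Real.exp u + 2*u + 4 with hH1
  set H2 : ℝ → ℝ := fun u => (2*u - 2) * Real.exp u + 2 with hH2
  have dH2 : ∀ x : ℝ, HasDerivAt H2 (2 * x * Real.exp x) x := by
    intro x
    have h := ((hasDerivAt_id x).const_mul 2 |>.sub_const 2).mul (Real.hasDerivAt_exp x)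
    have h2 := h.add_const 2
    refine h2.congr_deriv ?_
    simp [id]; ring
  have dH1 : ∀ x : ℝ, HasDerivAt H1 (H2 x) x := by
    intro x
    have h := ((hasDerivAt_id x).const_mul 2 |>.sub_const 4).mul (Real.hasDerivAt_exp x)
    have h2 := (h.add ((hasDerivAt_id x).const_mul 2)).add_const 4
    refine h2.congr_deriv ?_
    simp [hH2]; ring
  have dH : ∀ x : ℝ, HasDerivAt H (H1 x) x := by
    intro x
    have h := ((hasDerivAt_id x).const_mul 2 |>.sub_const 6).mul (Real.hasDerivAt_exp x)
    have hx2 : HasDerivAt (fun y : ℝ => y^2) (2*x) x := by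
      simpa using (hasDerivAt_pow 2 x)
    have h2 := ((h.add hx2).add ((hasDerivAt_id x).const_mul 4)).add_const 6
    refine h2.congr_deriv ?_
    simp [hH1]; ring
  have h2n : ∀ x, 0 ≤ x → 0 ≤ H2 x := by
    apply aux_nonneg_of_deriv H2 (fun x => 2 * x * Real.exp x) dH2
    · simp [hH2]
    · intro x hx
      positivity
  have h1n : ∀ x, 0 ≤ x → 0 ≤ H1 x := by
    apply aux_nonneg_of_deriv H1 H2 dH1
    · simp [hH1]
    · exact h2n
  exact aux_nonneg_of_deriv H H1 dH (by simp [hH]) h1n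

/-- With `f(u) = e^u - u - 1` and `ζ(y)` the unique positive root of
`ζ(e^ζ-1)/f(ζ) = y` for `y > 2`, one has `ζ(y) ≤ 3(y-2)` for all `y > 2`. -/
theorem stmt_9 (f ζ : ℝ → ℝ)
    (hf : ∀ u, f u = Real.exp u - u - 1)
    (hζ : ∀ y > 2, 0 < ζ y ∧ ζ y * (Real.exp (ζ y) - 1) / f (ζ y) = y) :
    ∀ y > 2, ζ y ≤ 3 * (y - 2) := by
  intro y hy
  obtain ⟨hu, heq⟩ := hζ y hy
  set u := ζ y with hudef
  have hfpos : 0 < f u := by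
    rw [hf]
    have := Real.add_one_lt_exp (ne_of_gt hu)
    linarith
  have hyf : y * f u = u * (Real.exp u - 1) := by
    field_simp at heq
    linarith
  have hHn := aux_H_nonneg u (le_of_lt hu)
  rw [hf] at hyf hfpos
  have key : u * (Real.exp u - u - 1) ≤ 3 * (y - 2) * (Real.exp u - u - 1) := by
    nlinarith [hHn, hyf]
  exact le_of_mul_le_mul_right key hfpos
end

section
/- Let f(u) = e^u − u − 1 and for x > 2 let ζ(x) > 0 be the unique positive solution of u(e^u − 1)/f(u) = x. Then ζ(x) ≥ x − 2 for all x > 2. -/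
/-- With `f(u) = e^u - u - 1` and `ζ(x)` the unique positive root of
`ζ(e^ζ-1)/f(ζ) = x` for `x > 2`, one has `ζ(x) ≥ x - 2` for all `x > 2`. -/
theorem stmt_10 (f ζ : ℝ → ℝ)
    (hf : ∀ u, f u = Real.exp u - u - 1)
    (hζ : ∀ x > 2, 0 < ζ x ∧ ζ x * (Real.exp (ζ x) - 1) / f (ζ x) = x) :
    ∀ x > 2, x - 2 ≤ ζ x := by
  intro x hx
  obtain ⟨hz, heq⟩ := hζ x hx
  set z := ζ x with hzdef
  have hfz : 0 < f z := by
    rw [hf]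
    have := Real.add_one_lt_exp (ne_of_gt hz)
    linarith
  have hmul : z * (Real.exp z - 1) = x * f z := by
    field_simp at heq
    linarith [heq]
  have hquad := Real.quadratic_le_exp_of_nonneg hz.le
  rw [hf] at hmul hfz
  nlinarith [hmul, hfz, hquad]
end

section
/- Let f(u) = e^u − u − 1, for x > 2 let ζ(x) > 0 be the unique positive solution of u(e^u − 1)/f(u) = x, and let g(x) = (e^{ζ(x)} − 1)^x f(ζ(x))^{1−x}. Then for all x > 2, (d/dx) log g(x) = log((e^{ζ(x)} − 1)/f(ζ(x))) + 1. -/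
open Real Set

lemma aux_fpos {u : ℝ} (hu : u ≠ 0) : 0 < Real.exp u - u - 1 := by
  have := Real.add_one_lt_exp hu
  linarith

lemma aux_key {u : ℝ} (hu : 0 < u) : 0 < (Real.exp u - 1)^2 - u^2 * Real.exp u := by
  have h1 : u / 2 < Real.sinh (u / 2) := Real.self_lt_sinh_iff.mpr (by linarith)
  rw [Real.sinh_eq] at h1
  have he : Real.exp (u/2) * Real.exp (u/2) = Real.exp u := by
    rw [← Real.exp_add]; ring_nf
  have he2 : Real.exp (u/2) * Real.exp (-(u/2)) = 1 := by
    rw [← Real.exp_add]; simp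
  have hp := Real.exp_pos (u/2)
  have h3 : u * Real.exp (u/2) < Real.exp u - 1 := by nlinarith
  have h4 : (u * Real.exp (u/2))^2 < (Real.exp u - 1)^2 := by
    have := mul_self_lt_mul_self (by positivity) h3
    nlinarith
  nlinarith

noncomputable def phi : ℝ → ℝ := fun u => u * (Real.exp u - 1) / (Real.exp u - u - 1)

lemma aux_phider {u : ℝ} (hu : 0 < u) :
    HasDerivAt phi (((Real.exp u - 1)^2 - u^2 * Real.exp u) / (Real.exp u - u - 1)^2) u := by
  have hB : Real.exp u - u - 1 ≠ 0 := (aux_fpos hu.ne').ne'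
  have h1 : HasDerivAt (fun v : ℝ => v * (Real.exp v - 1))
      (1 * (Real.exp u - 1) + u * Real.exp u) u :=
    (hasDerivAt_id u).mul ((Real.hasDerivAt_exp u).sub_const 1)
  have h2 : HasDerivAt (fun v : ℝ => Real.exp v - v - 1) (Real.exp u - 1) u := by
    have := ((Real.hasDerivAt_exp u).sub (hasDerivAt_id u)).sub_const 1
    simpa using this
  have := h1.div h2 hB
  refine this.congr_deriv ?_
  field_simp
  ring

lemma aux_mono : StrictMonoOn phi (Set.Ioi 0) := by
  apply strictMonoOn_of_deriv_pos (convex_Ioi 0)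
  · intro u hu
    exact ((aux_phider hu).continuousAt).continuousWithinAt
  · intro u hu
    rw [interior_Ioi] at hu
    rw [(aux_phider hu).deriv]
    exact div_pos (aux_key hu) (pow_pos (aux_fpos hu.ne') 2)


/-- With `f(u) = e^u - u - 1`, `ζ(x)` the unique positive root of
`ζ(e^ζ-1)/f(ζ) = x` for `x > 2`, and `g(x) = (e^{ζ(x)}-1)^x f(ζ(x))^{1-x}`, one has
`(d/dx) log g(x) = log((e^{ζ(x)}-1)/f(ζ(x))) + 1` for all `x > 2`. -/
theorem stmt_13 (f ζ g : ℝ → ℝ)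
    (hf : ∀ u, f u = Real.exp u - u - 1)
    (hζ : ∀ x > 2, 0 < ζ x ∧ ζ x * (Real.exp (ζ x) - 1) / f (ζ x) = x)
    (hg : ∀ x, g x = (Real.exp (ζ x) - 1) ^ x * f (ζ x) ^ (1 - x)) :
    ∀ x > 2,
      HasDerivAt (fun t => Real.log (g t))
        (Real.log ((Real.exp (ζ x) - 1) / f (ζ x)) + 1) x := by
  simp only [hf] at hζ hg ⊢
  intro x hx
  obtain ⟨hu0, heq⟩ := hζ x hx
  set u₀ := ζ x with hu₀def
  have hA0 : 0 < Real.exp u₀ - 1 := by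
    have := Real.add_one_lt_exp hu0.ne'; linarith
  have hB0 : 0 < Real.exp u₀ - u₀ - 1 := aux_fpos hu0.ne'
  have hphix : phi u₀ = x := heq
  -- continuity of ζ at x
  have hcont : ContinuousAt ζ x := by
    rw [Metric.continuousAt_iff]
    intro ε hε
    set ε' := min (ε/2) (u₀/2) with hε'def
    have hε'pos : 0 < ε' := lt_min (by linarith) (by linarith)
    have hε'le : ε' ≤ u₀/2 := min_le_right _ _
    have hε'le2 : ε' ≤ ε/2 := min_le_left _ _
    have hm1 : (u₀ - ε') ∈ Set.Ioi (0:ℝ) := by simp; linarith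
    have hm0 : u₀ ∈ Set.Ioi (0:ℝ) := hu0
    have hm2 : (u₀ + ε') ∈ Set.Ioi (0:ℝ) := by simp; linarith
    have hl : phi (u₀ - ε') < x := by
      have := aux_mono hm1 hm0 (by linarith)
      rwa [hphix] at this
    have hr : x < phi (u₀ + ε') := by
      have := aux_mono hm0 hm2 (by linarith)
      rwa [hphix] at this
    refine ⟨min (min (x - phi (u₀ - ε')) (phi (u₀ + ε') - x)) (x - 2),
      lt_min (lt_min (by linarith) (by linarith)) (by linarith), ?_⟩
    intro y hy
    rw [Real.dist_eq] at hy ⊢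
    have d1 : |y - x| < x - phi (u₀ - ε') :=
      lt_of_lt_of_le hy ((min_le_left _ _).trans (min_le_left _ _))
    have d2 : |y - x| < phi (u₀ + ε') - x :=
      lt_of_lt_of_le hy ((min_le_left _ _).trans (min_le_right _ _))
    have d3 : |y - x| < x - 2 := lt_of_lt_of_le hy (min_le_right _ _)
    rw [abs_lt] at d1 d2 d3
    have hy2 : 2 < y := by linarith [d3.1]
    obtain ⟨hyp, hye⟩ := hζ y hy2
    have hby : phi (ζ y) = y := hye
    have h1 : u₀ - ε' < ζ y := by
      by_contra h; push_neg at h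
      have := aux_mono.monotoneOn (Set.mem_Ioi.mpr hyp) hm1 h
      rw [hby] at this; linarith [d1.1]
    have h2 : ζ y < u₀ + ε' := by
      by_contra h; push_neg at h
      have := aux_mono.monotoneOn hm2 (Set.mem_Ioi.mpr hyp) h
      rw [hby] at this; linarith [d2.2]
    rw [abs_lt]
    constructor <;> [skip; skip] <;> simp only [← hu₀def] <;> linarith
  -- derivative of ζ
  set p := ((Real.exp u₀ - 1)^2 - u₀^2 * Real.exp u₀) / (Real.exp u₀ - u₀ - 1)^2 with hpdef
  have hppos : 0 < p := div_pos (aux_key hu0) (pow_pos hB0 2)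
  have hev : ∀ᶠ y in nhds x, phi (ζ y) = y := by
    filter_upwards [eventually_gt_nhds hx] with y hy
    exact (hζ y hy).2
  have hζder : HasDerivAt ζ p⁻¹ x :=
    HasDerivAt.of_local_left_inverse hcont (aux_phider hu0) hppos.ne' hev
  -- chain rule
  have hA : HasDerivAt (fun t => Real.exp (ζ t) - 1) (Real.exp u₀ * p⁻¹) x :=
    (hζder.exp).sub_const 1
  have hB : HasDerivAt (fun t => Real.exp (ζ t) - ζ t - 1) ((Real.exp u₀ - 1) * p⁻¹) x := by
    have := (hζder.exp.sub hζder).sub_const 1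
    refine this.congr_deriv ?_; ring
  have hlogA : HasDerivAt (fun t => t * Real.log (Real.exp (ζ t) - 1))
      (1 * Real.log (Real.exp u₀ - 1) + x * (Real.exp u₀ * p⁻¹ / (Real.exp u₀ - 1))) x :=
    (hasDerivAt_id x).mul (hA.log hA0.ne')
  have hlogB : HasDerivAt (fun t => (1 - t) * Real.log (Real.exp (ζ t) - ζ t - 1))
      ((0 - 1) * Real.log (Real.exp u₀ - u₀ - 1) +
        (1 - x) * ((Real.exp u₀ - 1) * p⁻¹ / (Real.exp u₀ - u₀ - 1))) x :=
    ((hasDerivAt_const x (1:ℝ)).sub (hasDerivAt_id x)).mul (hB.log hB0.ne')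
  have hF := hlogA.add hlogB
  have heq2 : (fun t => Real.log (g t)) =ᶠ[nhds x]
      (fun t => t * Real.log (Real.exp (ζ t) - 1) +
        (1 - t) * Real.log (Real.exp (ζ t) - ζ t - 1)) := by
    filter_upwards [eventually_gt_nhds hx] with y hy
    obtain ⟨hy0, _⟩ := hζ y hy
    have hA' : 0 < Real.exp (ζ y) - 1 := by
      have := Real.add_one_lt_exp hy0.ne'; linarith
    have hB' : 0 < Real.exp (ζ y) - ζ y - 1 := aux_fpos hy0.ne'
    rw [hg, Real.log_mul (Real.rpow_pos_of_pos hA' y).ne' (Real.rpow_pos_of_pos hB' (1-y)).ne',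
      Real.log_rpow hA', Real.log_rpow hB']
  have hfinal := hF.congr_of_eventuallyEq heq2
  refine hfinal.congr_deriv ?_; symm
  rw [Real.log_div hA0.ne' hB0.ne']
  have hN : (Real.exp u₀ - 1)^2 - u₀^2 * Real.exp u₀ ≠ 0 := (aux_key hu0).ne'
  have hx' : u₀ * (Real.exp u₀ - 1) / (Real.exp u₀ - u₀ - 1) = x := heq
  rw [hpdef, ← hx']
  field_simp
  ring_nf
  have hN' : (1 - Real.exp u₀ * 2 - Real.exp u₀ * u₀ ^ 2 + Real.exp u₀ ^ 2) ≠ 0 := by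
    convert hN using 1; ring
  field_simp
  ring
end

section
/- Let h(x) = x^x (1 − x)^{1−x} for 0 < x < 1, and fix a ∈ (0, 1). Then the function β ↦ β·log h(a/β) is convex on (a, ∞) (its second derivative in β equals a/(β(β − a)) > 0), and consequently for every β ≥ 1, h(a/β)^β ≥ h(a)·(1 − a)^{β−1}. -/
open Real Set Filter

/-- With `h(x) = x^x (1-x)^{1-x}` and fixed `a ∈ (0, 1)`, the function
`β ↦ β·log h(a/β)` is convex on `(a, ∞)` with second derivative `a/(β(β-a)) > 0`, and
consequently `h(a/β)^β ≥ h(a)(1-a)^{β-1}` for every `β ≥ 1`. -/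
theorem stmt_19 (a : ℝ) (ha0 : 0 < a) (ha1 : a < 1) (h : ℝ → ℝ)
    (hh : ∀ x : ℝ, h x = x ^ x * (1 - x) ^ (1 - x)) :
    ConvexOn ℝ (Set.Ioi a) (fun β => β * Real.log (h (a / β))) ∧
    (∀ β > a, deriv (deriv (fun β => β * Real.log (h (a / β)))) β = a / (β * (β - a)) ∧
      0 < a / (β * (β - a))) ∧
    (∀ β ≥ (1 : ℝ), h a * (1 - a) ^ (β - 1) ≤ h (a / β) ^ β) := by
  set f : ℝ → ℝ := fun β => β * Real.log (h (a / β)) with hfdef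
  set g : ℝ → ℝ := fun β => a * Real.log a + (β - a) * Real.log (β - a) - β * Real.log β
    with hgdef
  -- log of h
  have hlogh : ∀ x : ℝ, 0 < x → x < 1 →
      Real.log (h x) = x * Real.log x + (1 - x) * Real.log (1 - x) := by
    intro x hx0 hx1
    rw [hh, Real.log_mul (Real.rpow_pos_of_pos hx0 x).ne'
      (Real.rpow_pos_of_pos (by linarith) (1 - x)).ne', Real.log_rpow hx0,
      Real.log_rpow (by linarith)]
  -- f = g on Ioi a
  have hfg : ∀ β, a < β → f β = g β := by
    intro β hβ
    have hβ0 : 0 < β := ha0.trans hβ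
    have hx0 : 0 < a / β := div_pos ha0 hβ0
    have hx1 : a / β < 1 := (div_lt_one hβ0).2 hβ
    have h1 : (1 : ℝ) - a / β = (β - a) / β := by field_simp
    simp only [hfdef, hgdef]
    rw [hlogh _ hx0 hx1, h1, Real.log_div ha0.ne' hβ0.ne',
      Real.log_div (by linarith) hβ0.ne']
    field_simp
    ring
  -- derivative of g
  have hG : ∀ β, a < β → HasDerivAt g (Real.log (β - a) - Real.log β) β := by
    intro β hβ
    have hβ0 : 0 < β := ha0.trans hβ
    have hba : 0 < β - a := by linarith
    have h1 : HasDerivAt (fun β : ℝ => β - a) 1 β := (hasDerivAt_id β).sub_const a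
    have h2 : HasDerivAt (fun β : ℝ => Real.log (β - a)) ((β - a)⁻¹ * 1) β := by
      have := (Real.hasDerivAt_log hba.ne').comp β h1; exact this
    have d1 : HasDerivAt (fun β : ℝ => (β - a) * Real.log (β - a))
        (Real.log (β - a) + 1) β := by
      have := h1.mul h2
      refine this.congr_deriv ?_
      field_simp
    have d2 : HasDerivAt (fun β : ℝ => β * Real.log β) (Real.log β + 1) β := by
      have := (hasDerivAt_id β).mul (Real.hasDerivAt_log hβ0.ne')
      refine this.congr_deriv ?_
      field_simp
      simp only [id_eq]
      ring
    have := ((hasDerivAt_const β (a * Real.log a)).add d1).sub d2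
    refine this.congr_deriv ?_
    ring
  -- f has the same derivative on Ioi a
  have hopen : IsOpen (Ioi a) := isOpen_Ioi
  have hfeq : ∀ β ∈ Ioi a, f =ᶠ[nhds β] g := by
    intro β hβ
    exact eventually_of_mem (hopen.mem_nhds hβ) fun x hx => hfg x hx
  have hfd : ∀ β ∈ Ioi a, HasDerivAt f (Real.log (β - a) - Real.log β) β := by
    intro β hβ
    exact (hG β hβ).congr_of_eventuallyEq (hfeq β hβ)
  have hderivf : ∀ β ∈ Ioi a, deriv f β = Real.log (β - a) - Real.log β :=
    fun β hβ => (hfd β hβ).deriv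
  -- monotonicity of deriv f
  have hmono : MonotoneOn (deriv f) (Ioi a) := by
    intro x hx y hy hxy
    have hx0 : 0 < x := ha0.trans hx
    have hy0 : 0 < y := ha0.trans hy
    have hxa : 0 < x - a := by simpa using sub_pos.2 (show a < x from hx)
    have hya : 0 < y - a := by simpa using sub_pos.2 (show a < y from hy)
    rw [hderivf x hx, hderivf y hy, ← Real.log_div hxa.ne' hx0.ne',
      ← Real.log_div hya.ne' hy0.ne']
    apply Real.log_le_log (div_pos hxa hx0)
    rw [div_le_div_iff₀ hx0 hy0]
    nlinarith
  have hconv : ConvexOn ℝ (Ioi a) f := by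
    apply MonotoneOn.convexOn_of_deriv (convex_Ioi a)
    · exact fun x hx => (hfd x hx).differentiableAt.continuousAt.continuousWithinAt
    · rw [interior_Ioi]
      exact fun x hx => (hfd x hx).differentiableAt.differentiableWithinAt
    · rwa [interior_Ioi]
  refine ⟨hconv, ?_, ?_⟩
  · -- second derivative
    intro β hβ
    have hβ0 : 0 < β := ha0.trans hβ
    have hba : 0 < β - a := by linarith
    have heq : deriv f =ᶠ[nhds β] fun β => Real.log (β - a) - Real.log β :=
      eventually_of_mem (hopen.mem_nhds hβ) hderivf
    have hG' : HasDerivAt (fun β : ℝ => Real.log (β - a) - Real.log β)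
        ((β - a)⁻¹ * 1 - β⁻¹) β := by
      have := ((Real.hasDerivAt_log hba.ne').comp β ((hasDerivAt_id β).sub_const a)).sub
        (Real.hasDerivAt_log hβ0.ne'); exact this
    constructor
    · rw [heq.deriv_eq, hG'.deriv, mul_one, inv_sub_inv hba.ne' hβ0.ne',
        sub_sub_cancel, mul_comm]
    · exact div_pos ha0 (mul_pos hβ0 hba)
  · -- the inequality
    intro β hβ1
    have hβa : a < β := lt_of_lt_of_le ha1 hβ1
    have hβ0 : 0 < β := ha0.trans hβa
    have h1a : (0 : ℝ) < 1 - a := by linarith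
    -- auxiliary function F
    set F : ℝ → ℝ := fun t => g t - (t - 1) * Real.log (1 - a) with hFdef
    have hFd : ∀ t, 1 ≤ t →
        HasDerivAt F (Real.log (t - a) - Real.log t - Real.log (1 - a)) t := by
      intro t ht
      have hta : a < t := lt_of_lt_of_le ha1 ht
      have := (hG t hta).sub (((hasDerivAt_id t).sub_const 1).mul_const (Real.log (1 - a)))
      refine this.congr_deriv ?_
      ring
    have hFmono : MonotoneOn F (Ici 1) := by
      apply monotoneOn_of_deriv_nonneg (convex_Ici 1)
      · exact fun t ht => (hFd t ht).differentiableAt.continuousAt.continuousWithinAt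
      · rw [interior_Ici]
        exact fun t ht =>
          (hFd t (le_of_lt ht)).differentiableAt.differentiableWithinAt
      · rw [interior_Ici]
        intro t ht
        have ht1 : (1 : ℝ) ≤ t := le_of_lt ht
        have hta : a < t := lt_of_lt_of_le ha1 ht1
        have ht0 : 0 < t := ha0.trans hta
        have hta0 : 0 < t - a := by linarith
        rw [(hFd t ht1).deriv]
        have key : t * (1 - a) ≤ t - a := by nlinarith
        have := Real.log_le_log (mul_pos ht0 h1a) key
        rw [Real.log_mul ht0.ne' h1a.ne'] at this
        linarith
    have hkey : g 1 + (β - 1) * Real.log (1 - a) ≤ g β := by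
      have := hFmono (self_mem_Ici) (mem_Ici.2 hβ1) hβ1
      simp only [hFdef] at this
      linarith [this]
    -- positivity
    have hx0 : 0 < a / β := div_pos ha0 hβ0
    have hx1 : a / β < 1 := (div_lt_one hβ0).2 hβa
    have hhx : 0 < h (a / β) := by
      rw [hh]
      exact mul_pos (Real.rpow_pos_of_pos hx0 _) (Real.rpow_pos_of_pos (by linarith) _)
    have hha : 0 < h a := by
      rw [hh]
      exact mul_pos (Real.rpow_pos_of_pos ha0 _) (Real.rpow_pos_of_pos h1a _)
    have hLHS : Real.log (h (a / β) ^ β) = g β := by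
      rw [Real.log_rpow hhx]
      exact hfg β hβa
    have hg1 : g 1 = Real.log (h a) := by
      rw [hlogh a ha0 ha1]
      simp [hgdef]
    have hRHS : Real.log (h a * (1 - a) ^ (β - 1)) = g 1 + (β - 1) * Real.log (1 - a) := by
      rw [Real.log_mul hha.ne' (Real.rpow_pos_of_pos h1a _).ne', Real.log_rpow h1a, hg1]
    have hpos1 : 0 < h a * (1 - a) ^ (β - 1) :=
      mul_pos hha (Real.rpow_pos_of_pos h1a _)
    have hpos2 : 0 < h (a / β) ^ β := Real.rpow_pos_of_pos hhx _
    rw [← Real.exp_log hpos1, ← Real.exp_log hpos2]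
    apply Real.exp_le_exp.2
    rw [hLHS, hRHS]
    exact hkey
end
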